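/- arXiv:0901.1584 — 3 statements merged into one kernel-verified Lean document; each statement's English description precedes it below -/
import Mathlib

section
/- Let S be a Łukasiewicz logic and let Σ ⊆ S be a set of formulas which has no model. Then there exist natural numbers n, m and formulas φ₀, …, φ_{m−1} ∈ Σ such that ⊨ 1 ∸ nφ₀ ∸ … ∸ nφ_{m−1}, i.e. every truth assignment v satisfies v(1 ∸ nφ₀ ∸ … ∸ nφ_{m−1}) = 0 (here ∸ associates from left to right). -/
namespace Stmt0

/-- Formulas of Łukasiewicz logic, freely generated from atomic propositions indexed by `I`
by the binary connective `∸` and the unary connective `¬`. -/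
inductive LukFormula (I : Type*) : Type _ where
  | atom : I → LukFormula I
  | neg : LukFormula I → LukFormula I
  | sub : LukFormula I → LukFormula I → LukFormula I

namespace LukFormula

variable {I : Type*}

/-- The truth value of a formula under an assignment of truth values to the atoms. -/
def eval (v : I → ℝ) : LukFormula I → ℝ
  | atom i => v i
  | neg φ => 1 - eval v φ
  | sub φ ψ => max (eval v φ - eval v ψ) 0

/-- `nsub ψ n φ` is `ψ ∸ nφ`. -/
def nsub (ψ : LukFormula I) : ℕ → LukFormula I → LukFormula I
  | 0, _ => ψ
  | n + 1, φ => sub (nsub ψ n φ) φ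

/-- A truth assignment is determined by the truth values of the atoms, in `[0,1]`. -/
def IsAssignment (v : I → ℝ) : Prop := ∀ i, v i ∈ Set.Icc (0 : ℝ) 1

end LukFormula

open LukFormula

lemma eval_mem_Icc {I : Type*} {v : I → ℝ} (hv : IsAssignment v) :
    ∀ φ : LukFormula I, eval v φ ∈ Set.Icc (0 : ℝ) 1 := by
  intro φ
  induction φ with
  | atom i => exact hv i
  | neg φ ih =>
      simp only [eval, Set.mem_Icc] at *
      constructor <;> linarith [ih.1, ih.2]
  | sub φ ψ ih1 ih2 =>
      simp only [eval, Set.mem_Icc] at *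
      constructor
      · exact le_max_right _ _
      · apply max_le <;> linarith [ih1.1, ih1.2, ih2.1, ih2.2]

lemma continuous_eval {I : Type*} (φ : LukFormula I) :
    Continuous fun v : I → ℝ => eval v φ := by
  induction φ with
  | atom i => exact continuous_apply i
  | neg φ ih => exact continuous_const.sub ih
  | sub φ ψ ih1 ih2 => exact (ih1.sub ih2).max continuous_const

lemma eval_nsub {I : Type*} {v : I → ℝ} {ψ φ : LukFormula I} (n : ℕ)
    (hψ : 0 ≤ eval v ψ) (hφ : 0 ≤ eval v φ) :
    eval v (nsub ψ n φ) = max (eval v ψ - n * eval v φ) 0 := by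
  induction n with
  | zero => simp [nsub, max_eq_left hψ]
  | succ n ih =>
      have : eval v (nsub ψ (n+1) φ) = max (eval v (nsub ψ n φ) - eval v φ) 0 := rfl
      rw [this, ih]
      rcases le_total (eval v ψ - n * eval v φ) 0 with h | h
      · rw [max_eq_right h]
        have : eval v ψ - (↑(n+1)) * eval v φ ≤ 0 := by
          push_cast; nlinarith
        rw [max_eq_right this]
        exact max_eq_right (by linarith : (0:ℝ) - eval v φ ≤ 0)
      · rw [max_eq_left h]
        push_cast
        ring_nf
      
lemma eval_foldl {I : Type*} {v : I → ℝ} (hv : IsAssignment v) (n : ℕ) :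
    ∀ (l : List (LukFormula I)) (acc : LukFormula I), 0 ≤ eval v acc →
      eval v (l.foldl (fun acc φ => nsub acc n φ) acc) =
        max (eval v acc - n * (l.map (eval v)).sum) 0 := by
  intro l
  induction l with
  | nil => intro acc hacc; simp [max_eq_left hacc]
  | cons φ l ih =>
      intro acc hacc
      have hφ : 0 ≤ eval v φ := (eval_mem_Icc hv φ).1
      have h1 : eval v (nsub acc n φ) = max (eval v acc - n * eval v φ) 0 :=
        eval_nsub n hacc hφ
      have h0 : 0 ≤ eval v (nsub acc n φ) := by rw [h1]; exact le_max_right _ _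
      simp only [List.foldl_cons]
      rw [ih (nsub acc n φ) h0, h1]
      have hsum : 0 ≤ (l.map (eval v)).sum := by
        apply List.sum_nonneg
        intro x hx
        obtain ⟨ψ, _, rfl⟩ := List.mem_map.mp hx
        exact (eval_mem_Icc hv ψ).1
      rcases le_total (eval v acc - n * eval v φ) 0 with h | h
      · rw [max_eq_right h]
        have h2 : eval v acc - ↑n * ((φ :: l).map (eval v)).sum ≤ 0 := by
          simp only [List.map_cons, List.sum_cons]
          nlinarith
        rw [max_eq_right h2]
        have : (0:ℝ) - ↑n * (l.map (eval v)).sum ≤ 0 := by nlinarith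
        rw [max_eq_right this]
      · rw [max_eq_left h]
        simp only [List.map_cons, List.sum_cons]
        ring_nf
      
/-- If `Γ ⊆ S` has no model then there are `n`, `m` and formulas `φ₀, …, φ_{m-1} ∈ Γ` such that
`⊨ 1 ∸ nφ₀ ∸ … ∸ nφ_{m-1}`, where `1` abbreviates `¬(χ ∸ χ)` for a fixed formula `χ`. -/
theorem luk_compactness {I : Type*} (Γ : Set (LukFormula I))
    (hnomodel : ¬ ∃ v : I → ℝ, IsAssignment v ∧ ∀ φ ∈ Γ, eval v φ = 0)
    (χ : LukFormula I) :
    ∃ (n m : ℕ) (φs : Fin m → LukFormula I), (∀ i, φs i ∈ Γ) ∧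
      ∀ v : I → ℝ, IsAssignment v →
        eval v ((List.ofFn φs).foldl (fun acc φ => nsub acc n φ) (neg (sub χ χ))) = 0 := by
  classical
  set K : Set (I → ℝ) := Set.univ.pi (fun _ => Set.Icc (0:ℝ) 1) with hK
  have hKc : IsCompact K := isCompact_univ_pi (fun _ => isCompact_Icc)
  have hKne : K.Nonempty := ⟨fun _ => 0, fun i _ => ⟨le_refl 0, zero_le_one⟩⟩
  have hmemK : ∀ v : I → ℝ, v ∈ K ↔ IsAssignment v := by
    intro v
    simp [hK, Set.mem_pi, IsAssignment, Pi.le_def, forall_and]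
  have hempty : K ∩ ⋂ φ : Γ, {v : I → ℝ | eval v (φ : LukFormula I) = 0} = ∅ := by
    rw [Set.eq_empty_iff_forall_notMem]
    rintro v ⟨hvK, hvI⟩
    simp only [Set.mem_iInter, Set.mem_setOf_eq] at hvI
    exact hnomodel ⟨v, (hmemK v).1 hvK, fun φ hφ => hvI ⟨φ, hφ⟩⟩
  obtain ⟨t, ht⟩ := hKc.elim_finite_subfamily_closed
    (fun φ : Γ => {v : I → ℝ | eval v (φ : LukFormula I) = 0})
    (fun φ => isClosed_eq (continuous_eval _) continuous_const) hempty
  -- the sum function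
  set f : (I → ℝ) → ℝ := fun v => ∑ φ ∈ t, eval v (φ : LukFormula I) with hf
  have hfc : Continuous f := continuous_finset_sum _ (fun φ _ => continuous_eval _)
  obtain ⟨v₀, hv₀K, hv₀min⟩ := hKc.exists_isMinOn hKne hfc.continuousOn
  have hε : 0 < f v₀ := by
    have hv₀ : v₀ ∉ ⋂ φ ∈ t, {v : I → ℝ | eval v (φ : LukFormula I) = 0} := by
      intro h
      exact Set.eq_empty_iff_forall_notMem.mp ht v₀ ⟨hv₀K, h⟩
    simp only [Set.mem_iInter, Set.mem_setOf_eq, not_forall] at hv₀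
    obtain ⟨φ, hφt, hφne⟩ := hv₀
    apply Finset.sum_pos' (fun ψ _ => (eval_mem_Icc ((hmemK v₀).1 hv₀K) _).1)
    exact ⟨φ, hφt, lt_of_le_of_ne (eval_mem_Icc ((hmemK v₀).1 hv₀K) _).1 (Ne.symm hφne)⟩
  obtain ⟨n, hn⟩ := exists_nat_gt (1 / f v₀)
  have hn1 : 1 ≤ (n : ℝ) * f v₀ := by
    rw [div_lt_iff₀ hε] at hn
    linarith
  refine ⟨n, t.card, fun i => ((t.equivFin.symm i : Γ) : LukFormula I),
    fun i => (t.equivFin.symm i : Γ).2, ?_⟩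
  intro v hv
  have hsum : ((List.ofFn fun i => ((t.equivFin.symm i : Γ) : LukFormula I)).map (eval v)).sum
      = f v := by
    simp only [List.map_ofFn, List.sum_ofFn, Function.comp, hf]
    rw [← Finset.sum_coe_sort t (fun φ => eval v (φ : LukFormula I))]
    exact Fintype.sum_equiv t.equivFin.symm _ _ (fun i => rfl)
  have hacc : eval v (neg (sub χ χ)) = 1 := by simp [eval]
  rw [eval_foldl hv n _ _ (by rw [hacc]; norm_num), hsum, hacc]
  have hfv : f v₀ ≤ f v := hv₀min ((hmemK v).2 hv)
  have : 1 - (n : ℝ) * f v ≤ 0 := by nlinarith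
  exact max_eq_right this

end Stmt0
end

section
/- Let S be a Łukasiewicz logic, let φ, ψ₀, …, ψ_{n−1} ∈ S and let Σ = {ψ_i : i < n}. Then Σ ⊨ φ if and only if there exists a natural number m such that ⊨ φ ∸ mψ₀ ∸ … ∸ mψ_{n−1} (where ∸ associates from left to right). -/
namespace Stmt2

/-- Formulas of Łukasiewicz logic, freely generated from atomic propositions indexed by `I`
by the binary connective `∸` and the unary connective `¬`. -/
inductive LukFormula (I : Type*) : Type _ where
  | atom : I → LukFormula I
  | neg : LukFormula I → LukFormula I
  | sub : LukFormula I → LukFormula I → LukFormula I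

namespace LukFormula

variable {I : Type*}

/-- The truth value of a formula under an assignment of truth values to the atoms. -/
def eval (v : I → ℝ) : LukFormula I → ℝ
  | atom i => v i
  | neg φ => 1 - eval v φ
  | sub φ ψ => max (eval v φ - eval v ψ) 0

/-- `nsub ψ n φ` is `ψ ∸ nφ`. -/
def nsub (ψ : LukFormula I) : ℕ → LukFormula I → LukFormula I
  | 0, _ => ψ
  | n + 1, φ => sub (nsub ψ n φ) φ

/-- A truth assignment is determined by the truth values of the atoms, in `[0,1]`. -/
def IsAssignment (v : I → ℝ) : Prop := ∀ i, v i ∈ Set.Icc (0 : ℝ) 1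

end LukFormula

open LukFormula

section Geometry

variable {N : ℕ}

/-- An affine functional on `Fin N → ℝ`, as a linear part plus a constant. -/
abbrev Aff (N : ℕ) := ((Fin N → ℝ) →ₗ[ℝ] ℝ) × ℝ

def aeval (A : Aff N) (x : Fin N → ℝ) : ℝ := A.1 x + A.2

def asub (A B : Aff N) : Aff N := (A.1 - B.1, A.2 - B.2)

lemma aeval_asub (A B : Aff N) (x : Fin N → ℝ) :
    aeval (asub A B) x = aeval A x - aeval B x := by
  simp [aeval, asub, LinearMap.sub_apply]; ring

lemma aeval_combo (A : Aff N) {a b : ℝ} (hab : a + b = 1) (x y : Fin N → ℝ) :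
    aeval A (a • x + b • y) = a * aeval A x + b * aeval A y := by
  simp only [aeval, map_add, map_smul, smul_eq_mul]
  linear_combination (-A.2) * hab

lemma aeval_line (A : Aff N) (x z : Fin N → ℝ) (t : ℝ) :
    aeval A (x + t • z) = aeval A x + t * A.1 z := by
  simp only [aeval, map_add, map_smul, smul_eq_mul]; ring

lemma aeval_continuous (A : Aff N) : Continuous (aeval A) :=
  (A.1.continuous_of_finiteDimensional).add continuous_const

def polySet (L : List (Aff N)) : Set (Fin N → ℝ) := {x | ∀ A ∈ L, aeval A x ≤ 0}

lemma isClosed_polySet (L : List (Aff N)) : IsClosed (polySet L) := by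
  have h : polySet L = ⋂ A ∈ L, {x | aeval A x ≤ 0} := by
    ext x; simp [polySet]
  rw [h]
  exact isClosed_biInter fun A _ => isClosed_le (aeval_continuous A) continuous_const

lemma convex_polySet (L : List (Aff N)) : Convex ℝ (polySet L) := by
  intro x hx y hy a b ha hb hab
  intro A hA
  have h1 := hx A hA
  have h2 := hy A hA
  show aeval A (a • x + b • y) ≤ 0
  rw [aeval_combo A hab]
  nlinarith

lemma eps_aux (x z : Fin N → ℝ) (L : List (Aff N)) (h : ∀ A ∈ L, aeval A x ≤ 0) :
    ∃ ε > (0:ℝ), ∀ t : ℝ, |t| ≤ ε → ∀ A ∈ L, aeval A x ≠ 0 → aeval A (x + t • z) < 0 := by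
  induction L with
  | nil => exact ⟨1, one_pos, by simp⟩
  | cons A L ih =>
    obtain ⟨ε₁, hε₁, h₁⟩ := ih (fun B hB => h B (List.mem_cons_of_mem _ hB))
    by_cases hA : aeval A x = 0
    · refine ⟨ε₁, hε₁, fun t ht B hB hB0 => ?_⟩
      rcases List.mem_cons.1 hB with rfl | hB'
      · exact absurd hA hB0
      · exact h₁ t ht B hB' hB0
    · have hAneg : aeval A x < 0 := lt_of_le_of_ne (h A (List.mem_cons_self ..)) hA
      have hden : (0:ℝ) < |A.1 z| + 1 := by positivity
      set εA := (-aeval A x) / (|A.1 z| + 1) with hεA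
      have hεApos : 0 < εA := div_pos (by linarith) hden
      refine ⟨min ε₁ εA, lt_min hε₁ hεApos, fun t ht B hB hB0 => ?_⟩
      rcases List.mem_cons.1 hB with rfl | hB'
      · rw [aeval_line]
        have h1 : |t| ≤ εA := le_trans ht (min_le_right _ _)
        have h2 : t * B.1 z ≤ |t| * |B.1 z| := by
          calc t * B.1 z ≤ |t * B.1 z| := le_abs_self _
          _ = |t| * |B.1 z| := abs_mul _ _
        have h3 : εA * (|B.1 z| + 1) = -aeval B x := by
          rw [hεA]; field_simp
        nlinarith [abs_nonneg (B.1 z), abs_nonneg t]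
      · exact h₁ t (le_trans ht (min_le_left _ _)) B hB' hB0

lemma finite_extremePoints (L : List (Aff N)) :
    (Set.extremePoints ℝ (polySet L)).Finite := by
  apply Set.Finite.of_finite_image (f := fun x => {A | A ∈ L ∧ aeval A x = 0})
  · apply Set.Finite.subset (L.finite_toSet.finite_subsets)
    rintro S ⟨x, _, rfl⟩
    exact fun A hA => hA.1
  · rintro x hx y hy hxy
    by_contra hne
    rw [mem_extremePoints] at hx hy
    obtain ⟨ε, hε, hb⟩ := eps_aux x (x - y) L hx.1
    have hact : ∀ A ∈ L, aeval A x = 0 → aeval A y = 0 := by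
      intro A hA h0
      have heq : ({B | B ∈ L ∧ aeval B x = 0} : Set (Aff N)) = {B | B ∈ L ∧ aeval B y = 0} := hxy
      have hmem : A ∈ {B | B ∈ L ∧ aeval B y = 0} := by rw [← heq]; exact ⟨hA, h0⟩
      exact hmem.2
    have hlin : ∀ (A : Aff N), A.1 (x - y) = aeval A x - aeval A y := by
      intro A; simp [aeval, map_sub]
    have hmem : ∀ s : ℝ, |s| ≤ ε → x + s • (x - y) ∈ polySet L := by
      intro s hs A hA
      by_cases h0 : aeval A x = 0
      · rw [aeval_line, hlin, h0, hact A hA h0]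
        simp
      · exact le_of_lt (hb s hs A hA h0)
    have hp := hmem ε (by rw [abs_of_pos hε])
    have hq := hmem (-ε) (by rw [abs_neg, abs_of_pos hε])
    have hseg : x ∈ openSegment ℝ (x + ε • (x - y)) (x + (-ε) • (x - y)) := by
      refine ⟨1/2, 1/2, by norm_num, by norm_num, by norm_num, ?_⟩
      ext j
      simp only [Pi.add_apply, Pi.smul_apply, Pi.sub_apply, smul_eq_mul]
      ring
    have hext := hx.2 _ hp _ hq hseg
    have h0 : ε • (x - y) = 0 := by
      have h := hext.1
      have : x + ε • (x - y) = x + 0 := by rw [h, add_zero]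
      exact add_left_cancel this
    rcases smul_eq_zero.1 h0 with h | h
    · exact absurd h (ne_of_gt hε)
    · exact hne (sub_eq_zero.1 h)

lemma polySet_subset_hull (L : List (Aff N)) (hbdd : Bornology.IsBounded (polySet L)) :
    polySet L ⊆ convexHull ℝ (Set.extremePoints ℝ (polySet L)) := by
  have hcomp : IsCompact (polySet L) :=
    Metric.isCompact_of_isClosed_isBounded (isClosed_polySet L) hbdd
  have hKM := closure_convexHull_extremePoints hcomp (convex_polySet L)
  rw [(finite_extremePoints L).isClosed_convexHull ℝ |>.closure_eq] at hKM
  exact hKM.ge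

lemma poly_comparison (L : List (Aff N)) (F G : (Fin N → ℝ) → ℝ) (AF AG : Aff N)
    (hbdd : Bornology.IsBounded (polySet L))
    (hF : ∀ x ∈ polySet L, F x = aeval AF x) (hG : ∀ x ∈ polySet L, G x = aeval AG x)
    (hGnn : ∀ x ∈ polySet L, 0 ≤ G x)
    (hpt : ∀ x ∈ polySet L, ∃ m : ℕ, F x ≤ m * G x) :
    ∃ m : ℕ, ∀ x ∈ polySet L, F x ≤ m * G x := by
  have hEfin := finite_extremePoints L
  have hEP : Set.extremePoints ℝ (polySet L) ⊆ polySet L := extremePoints_subset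
  have hch : ∀ u : Fin N → ℝ, ∃ m : ℕ, u ∈ Set.extremePoints ℝ (polySet L) → F u ≤ m * G u := by
    intro u
    by_cases hu : u ∈ Set.extremePoints ℝ (polySet L)
    · obtain ⟨m, hm⟩ := hpt u (hEP hu)
      exact ⟨m, fun _ => hm⟩
    · exact ⟨0, fun h => absurd h hu⟩
  choose f hf using hch
  set m := hEfin.toFinset.sup f with hm
  refine ⟨m, fun x hx => ?_⟩
  have hconv : Convex ℝ {y | aeval AF y ≤ m * aeval AG y} := by
    intro p hp q hq a b ha hb hab
    simp only [Set.mem_setOf_eq] at hp hq ⊢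
    rw [aeval_combo AF hab, aeval_combo AG hab]
    nlinarith
  have hsub : Set.extremePoints ℝ (polySet L) ⊆ {y | aeval AF y ≤ m * aeval AG y} := by
    intro u hu
    have huP := hEP hu
    simp only [Set.mem_setOf_eq]
    rw [← hF u huP, ← hG u huP]
    have h1 := hf u hu
    have h2 : f u ≤ m := Finset.le_sup (hEfin.mem_toFinset.2 hu)
    have h3 := hGnn u huP
    calc F u ≤ f u * G u := h1
    _ ≤ m * G u := mul_le_mul_of_nonneg_right (Nat.cast_le.2 h2) h3
  have hhull := polySet_subset_hull L hbdd hx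
  have := convexHull_min hsub hconv hhull
  rw [hF x hx, hG x hx]
  exact this

end Geometry

section Logic

open LukFormula

variable {I : Type*} {N : ℕ}

def atomsList : LukFormula I → List I
  | .atom i => [i]
  | .neg χ => atomsList χ
  | .sub χ₁ χ₂ => atomsList χ₁ ++ atomsList χ₂

lemma eval_congr {v w : I → ℝ} :
    ∀ χ : LukFormula I, (∀ i ∈ atomsList χ, v i = w i) → eval v χ = eval w χ
  | .atom i, h => h i (by simp [atomsList])
  | .neg χ, h => by
      show 1 - eval v χ = 1 - eval w χ
      rw [eval_congr χ h]
  | .sub χ₁ χ₂, h => by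
      show max (eval v χ₁ - eval v χ₂) 0 = max (eval w χ₁ - eval w χ₂) 0
      rw [eval_congr χ₁ (fun i hi => h i (by simp [atomsList, hi])),
          eval_congr χ₂ (fun i hi => h i (by simp [atomsList, hi]))]

lemma eval_mem_Icc {v : I → ℝ} (hv : IsAssignment v) :
    ∀ χ : LukFormula I, eval v χ ∈ Set.Icc (0:ℝ) 1
  | .atom i => hv i
  | .neg χ => by
      obtain ⟨h0, h1⟩ := eval_mem_Icc hv χ
      exact ⟨by show (0:ℝ) ≤ 1 - eval v χ; linarith, by show 1 - eval v χ ≤ 1; linarith⟩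
  | .sub χ₁ χ₂ => by
      obtain ⟨a0, a1⟩ := eval_mem_Icc hv χ₁
      obtain ⟨b0, b1⟩ := eval_mem_Icc hv χ₂
      refine ⟨le_max_right _ _, ?_⟩
      show max (eval v χ₁ - eval v χ₂) 0 ≤ 1
      rw [max_le_iff]
      constructor <;> linarith

lemma eval_nsub {v : I → ℝ} (hv : IsAssignment v) (χ : LukFormula I) :
    ∀ (m : ℕ) (α : LukFormula I),
      eval v (nsub α m χ) = max (eval v α - m * eval v χ) 0
  | 0, α => by
      rw [Nat.cast_zero, zero_mul, sub_zero, max_eq_left (eval_mem_Icc hv α).1]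
      rfl
  | m+1, α => by
      have hc := (eval_mem_Icc hv χ).1
      show max (eval v (nsub α m χ) - eval v χ) 0 = _
      rw [eval_nsub hv χ m α]
      push_cast
      rcases le_or_gt (eval v α - m * eval v χ) 0 with h | h
      · rw [max_eq_right h, max_eq_right (by linarith), max_eq_right (by nlinarith)]
      · rw [max_eq_left (le_of_lt h)]
        congr 1
        ring
  termination_by m => m

lemma eval_foldl {v : I → ℝ} (hv : IsAssignment v) (m : ℕ) :
    ∀ (l : List (LukFormula I)) (α : LukFormula I),
      eval v (l.foldl (fun acc χ => nsub acc m χ) α) =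
        max (eval v α - m * (l.map (eval v)).sum) 0
  | [], α => by
      simp [max_eq_left (eval_mem_Icc hv α).1]
  | χ :: l, α => by
      have hc := (eval_mem_Icc hv χ).1
      have hs : 0 ≤ (l.map (eval v)).sum := by
        apply List.sum_nonneg
        intro x hx
        obtain ⟨χ', _, rfl⟩ := List.mem_map.1 hx
        exact (eval_mem_Icc hv χ').1
      show eval v (l.foldl _ (nsub α m χ)) = _
      rw [eval_foldl hv m l (nsub α m χ), eval_nsub hv χ m α]
      simp only [List.map_cons, List.sum_cons]
      have hm : (0:ℝ) ≤ m := Nat.cast_nonneg m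
      rcases le_or_gt (eval v α - m * eval v χ) 0 with h | h
      · rw [max_eq_right h]
        rw [max_eq_right (by nlinarith), max_eq_right (by nlinarith)]
      · rw [max_eq_left (le_of_lt h)]
        congr 1
        ring

def Patt : LukFormula I → Type
  | .atom _ => Unit
  | .neg χ => Patt χ
  | .sub χ₁ χ₂ => Bool × Patt χ₁ × Patt χ₂

def pattFintype : (χ : LukFormula I) → Fintype (Patt χ)
  | .atom _ => inferInstanceAs (Fintype Unit)
  | .neg χ => pattFintype χ
  | .sub χ₁ χ₂ =>
      letI := pattFintype χ₁
      letI := pattFintype χ₂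
      inferInstanceAs (Fintype (Bool × Patt χ₁ × Patt χ₂))

instance instPattFintype (χ : LukFormula I) : Fintype (Patt χ) := pattFintype χ

def affP (π : I → ((Fin N → ℝ) →ₗ[ℝ] ℝ)) : (χ : LukFormula I) → Patt χ → Aff N
  | .atom i, _ => (π i, 0)
  | .neg χ, p => (-(affP π χ p).1, 1 - (affP π χ p).2)
  | .sub χ₁ χ₂, p =>
      if p.1 = true then asub (affP π χ₁ p.2.1) (affP π χ₂ p.2.2)
      else ((0 : (Fin N → ℝ) →ₗ[ℝ] ℝ), (0:ℝ))

def Ok (π : I → ((Fin N → ℝ) →ₗ[ℝ] ℝ)) :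
    (χ : LukFormula I) → Patt χ → (Fin N → ℝ) → Prop
  | .atom _, _, _ => True
  | .neg χ, p, x => Ok π χ p x
  | .sub χ₁ χ₂, p, x => Ok π χ₁ p.2.1 x ∧ Ok π χ₂ p.2.2 x ∧
      (if p.1 = true then aeval (affP π χ₂ p.2.2) x ≤ aeval (affP π χ₁ p.2.1) x
       else aeval (affP π χ₁ p.2.1) x ≤ aeval (affP π χ₂ p.2.2) x)

lemma affP_correct (π : I → ((Fin N → ℝ) →ₗ[ℝ] ℝ)) (v : I → ℝ) (x : Fin N → ℝ)
    (hπ : ∀ i, π i x = v i) :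
    ∀ (χ : LukFormula I) (p : Patt χ), Ok π χ p x → aeval (affP π χ p) x = eval v χ
  | .atom i, p, _ => by
      show aeval (π i, 0) x = v i
      simp [aeval, hπ i]
  | .neg χ, p, h => by
      have ih := affP_correct π v x hπ χ p h
      show aeval (-(affP π χ p).1, 1 - (affP π χ p).2) x = 1 - eval v χ
      simp only [aeval, LinearMap.neg_apply] at ih ⊢
      linarith
  | .sub χ₁ χ₂, p, h => by
      obtain ⟨h₁, h₂, hb⟩ := h
      have e₁ := affP_correct π v x hπ χ₁ p.2.1 h₁
      have e₂ := affP_correct π v x hπ χ₂ p.2.2 h₂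
      show aeval (if p.1 = true then asub (affP π χ₁ p.2.1) (affP π χ₂ p.2.2)
        else ((0 : (Fin N → ℝ) →ₗ[ℝ] ℝ), (0:ℝ))) x = max (eval v χ₁ - eval v χ₂) 0
      by_cases hp : p.1 = true
      · rw [if_pos hp] at hb ⊢
        rw [aeval_asub, e₁, e₂]
        rw [max_eq_left (by rw [← e₁, ← e₂]; linarith)]
      · rw [if_neg hp] at hb ⊢
        have h0 : aeval ((0 : (Fin N → ℝ) →ₗ[ℝ] ℝ), (0:ℝ)) x = 0 := by simp [aeval]
        rw [h0, eq_comm, max_eq_right (by rw [← e₁, ← e₂]; linarith)]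

lemma ok_total (π : I → ((Fin N → ℝ) →ₗ[ℝ] ℝ)) (x : Fin N → ℝ) :
    ∀ χ : LukFormula I, ∃ p : Patt χ, Ok π χ p x
  | .atom i => ⟨(), trivial⟩
  | .neg χ => ok_total π x χ
  | .sub χ₁ χ₂ => by
      obtain ⟨p₁, h₁⟩ := ok_total π x χ₁
      obtain ⟨p₂, h₂⟩ := ok_total π x χ₂
      rcases le_total (aeval (affP π χ₂ p₂) x) (aeval (affP π χ₁ p₁) x) with h | h
      · exact ⟨(true, p₁, p₂), h₁, h₂, by simpa using h⟩
      · exact ⟨(false, p₁, p₂), h₁, h₂, by simpa using h⟩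

def constrs (π : I → ((Fin N → ℝ) →ₗ[ℝ] ℝ)) :
    (χ : LukFormula I) → Patt χ → List (Aff N)
  | .atom _, _ => []
  | .neg χ, p => constrs π χ p
  | .sub χ₁ χ₂, p =>
      (if p.1 = true then asub (affP π χ₂ p.2.2) (affP π χ₁ p.2.1)
       else asub (affP π χ₁ p.2.1) (affP π χ₂ p.2.2))
      :: (constrs π χ₁ p.2.1 ++ constrs π χ₂ p.2.2)

lemma ok_iff (π : I → ((Fin N → ℝ) →ₗ[ℝ] ℝ)) (x : Fin N → ℝ) :
    ∀ (χ : LukFormula I) (p : Patt χ),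
      Ok π χ p x ↔ ∀ A ∈ constrs π χ p, aeval A x ≤ 0
  | .atom i, p => by
      constructor
      · intro _ A hA
        exact absurd hA (List.not_mem_nil (a := A))
      · intro _
        trivial
  | .neg χ, p => ok_iff π x χ p
  | .sub χ₁ χ₂, p => by
      have i₁ := ok_iff π x χ₁ p.2.1
      have i₂ := ok_iff π x χ₂ p.2.2
      show (Ok π χ₁ p.2.1 x ∧ Ok π χ₂ p.2.2 x ∧ _) ↔ _
      constructor
      · rintro ⟨h₁, h₂, hb⟩ A hA
        rcases List.mem_cons.1 hA with rfl | hA'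
        · by_cases hp : p.1 = true
          · rw [if_pos hp] at hb ⊢
            rw [aeval_asub]; linarith
          · rw [if_neg hp] at hb ⊢
            rw [aeval_asub]; linarith
        · rcases List.mem_append.1 hA' with hA'' | hA''
          · exact i₁.1 h₁ A hA''
          · exact i₂.1 h₂ A hA''
      · intro hall
        have hhead := hall _ (List.mem_cons_self ..)
        refine ⟨i₁.2 (fun A hA => hall A (List.mem_cons_of_mem _ (List.mem_append_left _ hA))),
          i₂.2 (fun A hA => hall A (List.mem_cons_of_mem _ (List.mem_append_right _ hA))), ?_⟩
        by_cases hp : p.1 = true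
        · rw [if_pos hp] at hhead ⊢
          rw [aeval_asub] at hhead; linarith
        · rw [if_neg hp] at hhead ⊢
          rw [aeval_asub] at hhead; linarith

def cubeL (N : ℕ) : List (Aff N) :=
  (List.ofFn fun j : Fin N => ((LinearMap.proj j : (Fin N → ℝ) →ₗ[ℝ] ℝ), (-1 : ℝ)))
  ++ (List.ofFn fun j : Fin N => (-(LinearMap.proj j : (Fin N → ℝ) →ₗ[ℝ] ℝ), (0 : ℝ)))

lemma cubeL_spec (x : Fin N → ℝ) :
    (∀ A ∈ cubeL N, aeval A x ≤ 0) ↔ ∀ j, 0 ≤ x j ∧ x j ≤ 1 := by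
  constructor
  · intro h j
    have h1 := h _ (List.mem_append_left _ (List.mem_ofFn.2 ⟨j, rfl⟩))
    have h2 := h _ (List.mem_append_right _ (List.mem_ofFn.2 ⟨j, rfl⟩))
    simp only [aeval, LinearMap.proj_apply, LinearMap.neg_apply, add_zero] at h1 h2
    constructor <;> linarith
  · intro h A hA
    rcases List.mem_append.1 hA with h1 | h1 <;> rw [List.mem_ofFn] at h1 <;>
      obtain ⟨j, rfl⟩ := h1
    · simp only [aeval, LinearMap.proj_apply]
      linarith [(h j).2]
    · simp only [aeval, LinearMap.neg_apply, LinearMap.proj_apply, add_zero]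
      linarith [(h j).1]

lemma cube_bounded : Bornology.IsBounded {x : Fin N → ℝ | ∀ j, 0 ≤ x j ∧ x j ≤ 1} := by
  apply Bornology.IsBounded.subset (Metric.isBounded_closedBall (x := (0 : Fin N → ℝ)) (r := 1))
  intro x hx
  simp only [Metric.mem_closedBall, dist_zero_right]
  rw [pi_norm_le_iff_of_nonneg zero_le_one]
  intro j
  rw [Real.norm_eq_abs, abs_le]
  exact ⟨by linarith [(hx j).1], (hx j).2⟩

def sumAff {n : ℕ} (A : Fin n → Aff N) : Aff N := (∑ i, (A i).1, ∑ i, (A i).2)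

lemma aeval_sumAff {n : ℕ} (A : Fin n → Aff N) (x : Fin N → ℝ) :
    aeval (sumAff A) x = ∑ i, aeval (A i) x := by
  simp [aeval, sumAff, Finset.sum_add_distrib]

end Logic

section Core

open LukFormula

variable {I : Type*}

open Classical in
noncomputable def idxmap (L : List I) : I → ((Fin L.length → ℝ) →ₗ[ℝ] ℝ) := fun i =>
  if h : i ∈ L then
    LinearMap.proj ⟨L.findIdx (fun j => decide (j = i)),
      List.findIdx_lt_length_of_exists ⟨i, h, by simp⟩⟩
  else 0

lemma idxmap_get (L : List I) {i : I} (h : i ∈ L) (v : I → ℝ) :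
    idxmap L i (fun k => v (L.get k)) = v i := by
  classical
  rw [idxmap, dif_pos h]
  simp only [LinearMap.proj_apply]
  congr 1
  have hlt : L.findIdx (fun j => decide (j = i)) < L.length :=
    List.findIdx_lt_length_of_exists ⟨i, h, by simp⟩
  have := List.findIdx_getElem (p := fun j => decide (j = i)) (xs := L) (w := hlt)
  simpa using this

lemma idxmap_assign (L : List I) (x : Fin L.length → ℝ) (hx : ∀ j, 0 ≤ x j ∧ x j ≤ 1) :
    IsAssignment (fun i => idxmap L i x) := by
  classical
  intro i
  show idxmap L i x ∈ Set.Icc (0:ℝ) 1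
  unfold idxmap
  by_cases h : i ∈ L
  · rw [dif_pos h]
    exact ⟨(hx _).1, (hx _).2⟩
  · rw [dif_neg h]
    exact ⟨le_refl _, zero_le_one⟩

lemma core {n : ℕ} (φ : LukFormula I) (ψ : Fin n → LukFormula I)
    (H : ∀ v : I → ℝ, IsAssignment v → (∀ i, eval v (ψ i) = 0) → eval v φ = 0) :
    ∃ m : ℕ, ∀ v : I → ℝ, IsAssignment v → eval v φ ≤ m * ∑ i, eval v (ψ i) := by
  classical
  set L : List I := atomsList φ ++ (List.ofFn fun i => atomsList (ψ i)).flatten with hLdef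
  set N := L.length with hN
  set π : I → ((Fin N → ℝ) →ₗ[ℝ] ℝ) := idxmap L with hπdef
  set w : (Fin N → ℝ) → I → ℝ := fun x i => π i x with hwdef
  set F : (Fin N → ℝ) → ℝ := fun x => eval (w x) φ with hFdef
  set G : (Fin N → ℝ) → ℝ := fun x => ∑ i, eval (w x) (ψ i) with hGdef
  set LL : (Patt φ × ((i : Fin n) → Patt (ψ i))) → List (Aff N) := fun σ =>
    cubeL N ++ constrs π φ σ.1 ++ (List.ofFn fun i => constrs π (ψ i) (σ.2 i)).flatten
    with hLLdef
  have hmemP : ∀ σ x, x ∈ polySet (LL σ) ↔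
      ((∀ j, 0 ≤ x j ∧ x j ≤ 1) ∧ Ok π φ σ.1 x ∧ ∀ i, Ok π (ψ i) (σ.2 i) x) := by
    intro σ x
    constructor
    · intro hmem
      refine ⟨(cubeL_spec x).1 (fun A hA => hmem A (List.mem_append_left _ (List.mem_append_left _ hA))),
        (ok_iff π x φ σ.1).2 (fun A hA => hmem A (List.mem_append_left _ (List.mem_append_right _ hA))),
        fun i => (ok_iff π x (ψ i) (σ.2 i)).2 (fun A hA => hmem A (List.mem_append_right _ ?_))⟩
      exact List.mem_flatten.2 ⟨_, List.mem_ofFn.2 ⟨i, rfl⟩, hA⟩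
    · rintro ⟨hcube, hφ, hψ⟩ A hA
      rcases List.mem_append.1 hA with hA' | hA'
      · rcases List.mem_append.1 hA' with hA'' | hA''
        · exact (cubeL_spec x).2 hcube A hA''
        · exact (ok_iff π x φ σ.1).1 hφ A hA''
      · obtain ⟨l, hl, hAl⟩ := List.mem_flatten.1 hA'
        obtain ⟨i, rfl⟩ := List.mem_ofFn.1 hl
        exact (ok_iff π x (ψ i) (σ.2 i)).1 (hψ i) A hAl
  have hw_assign : ∀ x : Fin N → ℝ, (∀ j, 0 ≤ x j ∧ x j ≤ 1) → IsAssignment (w x) :=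
    fun x hx => idxmap_assign L x hx
  have hGnn : ∀ x : Fin N → ℝ, (∀ j, 0 ≤ x j ∧ x j ≤ 1) → 0 ≤ G x := by
    intro x hx
    exact Finset.sum_nonneg fun i _ => (eval_mem_Icc (hw_assign x hx) (ψ i)).1
  have claim : ∀ σ : Patt φ × ((i : Fin n) → Patt (ψ i)),
      ∃ m : ℕ, ∀ x ∈ polySet (LL σ), F x ≤ m * G x := by
    intro σ
    apply poly_comparison (LL σ) F G (affP π φ σ.1) (sumAff fun i => affP π (ψ i) (σ.2 i))
    · apply Bornology.IsBounded.subset cube_bounded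
      intro x hx
      exact ((hmemP σ x).1 hx).1
    · intro x hx
      obtain ⟨hcube, hφ, hψ⟩ := (hmemP σ x).1 hx
      exact (affP_correct π (w x) x (fun i => rfl) φ σ.1 hφ).symm
    · intro x hx
      obtain ⟨hcube, hφ, hψ⟩ := (hmemP σ x).1 hx
      rw [aeval_sumAff]
      exact Finset.sum_congr rfl fun i _ =>
        (affP_correct π (w x) x (fun i => rfl) (ψ i) (σ.2 i) (hψ i)).symm
    · intro x hx
      exact hGnn x ((hmemP σ x).1 hx).1
    · intro x hx
      obtain ⟨hcube, hφ, hψ⟩ := (hmemP σ x).1 hx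
      have hassign := hw_assign x hcube
      by_cases hG0 : G x = 0
      · have hz : ∀ i, eval (w x) (ψ i) = 0 := by
          intro i
          have := (Finset.sum_eq_zero_iff_of_nonneg
            (fun i _ => (eval_mem_Icc hassign (ψ i)).1)).1 hG0
          exact this i (Finset.mem_univ i)
        refine ⟨0, ?_⟩
        have hF0 : F x = 0 := H (w x) hassign hz
        rw [hF0]
        simp
      · have hGpos : 0 < G x := lt_of_le_of_ne (hGnn x hcube) (Ne.symm hG0)
        obtain ⟨m, hm⟩ := exists_nat_ge (F x / G x)
        refine ⟨m, ?_⟩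
        rw [div_le_iff₀ hGpos] at hm
        linarith
  choose f hf using claim
  set M := Finset.univ.sup f with hM
  refine ⟨M, ?_⟩
  have hx_all : ∀ x : Fin N → ℝ, (∀ j, 0 ≤ x j ∧ x j ≤ 1) → F x ≤ M * G x := by
    intro x hx
    obtain ⟨p₀, hp₀⟩ := ok_total π x φ
    have hps : ∀ i, ∃ p : Patt (ψ i), Ok π (ψ i) p x := fun i => ok_total π x (ψ i)
    choose ps hpsp using hps
    have hxP : x ∈ polySet (LL (p₀, ps)) := (hmemP (p₀, ps) x).2 ⟨hx, hp₀, hpsp⟩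
    calc F x ≤ f (p₀, ps) * G x := hf (p₀, ps) x hxP
    _ ≤ M * G x := by
        apply mul_le_mul_of_nonneg_right _ (hGnn x hx)
        exact_mod_cast Nat.cast_le.2 (Finset.le_sup (Finset.mem_univ (p₀, ps)))
  intro v hv
  set x : Fin N → ℝ := fun k => v (L.get k) with hxdef
  have hxcube : ∀ j, 0 ≤ x j ∧ x j ≤ 1 := fun j => ⟨(hv _).1, (hv _).2⟩
  have hagree : ∀ i ∈ L, w x i = v i := fun i hi => idxmap_get L hi v
  have hFx : F x = eval v φ :=
    eval_congr φ (fun i hi => hagree i (List.mem_append_left _ hi))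
  have hGx : G x = ∑ i, eval v (ψ i) := by
    apply Finset.sum_congr rfl
    intro i _
    apply eval_congr
    intro a ha
    apply hagree
    apply List.mem_append_right
    exact List.mem_flatten.2 ⟨_, List.mem_ofFn.2 ⟨i, rfl⟩, ha⟩
  rw [← hFx, ← hGx]
  exact hx_all x hxcube

end Core

/-- For `Σ = {ψ₀, …, ψ_{n-1}}` finite, `Σ ⊨ φ` if and only if there is `m` such that
`⊨ φ ∸ mψ₀ ∸ … ∸ mψ_{n-1}` (with `∸` associating from left to right). -/
theorem finite_implication {I : Type*} {n : ℕ} (φ : LukFormula I) (ψ : Fin n → LukFormula I) :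
    (∀ v : I → ℝ, IsAssignment v → (∀ i, eval v (ψ i) = 0) → eval v φ = 0) ↔
      ∃ m : ℕ, ∀ v : I → ℝ, IsAssignment v →
        eval v ((List.ofFn ψ).foldl (fun acc χ => nsub acc m χ) φ) = 0 := by
  constructor
  · intro H
    obtain ⟨m, hm⟩ := core φ ψ H
    refine ⟨m, fun v hv => ?_⟩
    rw [eval_foldl hv m (List.ofFn ψ) φ]
    have hsum : ((List.ofFn ψ).map (eval v)).sum = ∑ i, eval v (ψ i) := by
      rw [List.map_ofFn, List.sum_ofFn]
      rfl
    rw [hsum]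
    exact max_eq_right (by linarith [hm v hv])
  · rintro ⟨m, hm⟩ v hv hz
    have h := hm v hv
    rw [eval_foldl hv m (List.ofFn ψ) φ] at h
    have hsum : ((List.ofFn ψ).map (eval v)).sum = 0 := by
      rw [List.map_ofFn, List.sum_ofFn]
      exact Finset.sum_eq_zero fun i _ => hz i
    rw [hsum, mul_zero, sub_zero, max_eq_left (eval_mem_Icc hv φ).1] at h
    exact h

end Stmt2
end

section
/- Let S be an arbitrary (not necessarily free) continuous propositional logic and let Σ ⊆ S. Then Σ is consistent (in the deduction system A1–A6 with Modus Ponens) if and only if Σ is satisfiable, i.e. there is a truth assignment v : S → [0,1] with v(φ) = 0 for all φ ∈ Σ. -/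
namespace Stmt7

/-- A continuous propositional logic: a set equipped with a binary operation `∸` and unary
operations `¬` and `½` (no axioms imposed). -/
structure CPL (S : Type*) where
  sub : S → S → S
  neg : S → S
  half : S → S

variable {S : Type*}

/-- A truth assignment on a continuous propositional logic: a map into `[0,1]` respecting
the connectives. -/
def CPL.IsTruthAssignment (L : CPL S) (v : S → ℝ) : Prop :=
  (∀ φ : S, v φ ∈ Set.Icc (0 : ℝ) 1) ∧
  (∀ φ : S, v (L.neg φ) = 1 - v φ) ∧
  (∀ φ : S, v (L.half φ) = v φ / 2) ∧
  (∀ φ ψ : S, v (L.sub φ ψ) = max (v φ - v ψ) 0)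

/-- `φ ∧ ψ` abbreviates `φ ∸ (φ ∸ ψ)`. -/
def CPL.land (L : CPL S) (φ ψ : S) : S := L.sub φ (L.sub φ ψ)

/-- The axiom schemes A1–A6 of continuous propositional logic. -/
inductive CPL.Axiom (L : CPL S) : S → Prop where
  | a1 (φ ψ : S) : CPL.Axiom L (L.sub (L.sub φ ψ) φ)
  | a2 (φ ψ ρ : S) : CPL.Axiom L (L.sub (L.sub (L.sub ρ φ) (L.sub ρ ψ)) (L.sub ψ φ))
  | a3 (φ ψ : S) : CPL.Axiom L (L.sub (L.land φ ψ) (L.land ψ φ))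
  | a4 (φ ψ : S) : CPL.Axiom L (L.sub (L.sub φ ψ) (L.sub (L.neg ψ) (L.neg φ)))
  | a5 (φ : S) : CPL.Axiom L (L.sub (L.half φ) (L.sub φ (L.half φ)))
  | a6 (φ : S) : CPL.Axiom L (L.sub (L.sub φ (L.half φ)) (L.half φ))

/-- Formal deduction from a set of premises `Γ`, using the axiom schemes A1–A6 and
Modus Ponens (from `φ` and `ψ ∸ φ` infer `ψ`). -/
inductive CPL.Deduces (L : CPL S) (Γ : Set S) : S → Prop where
  | ax {φ : S} : CPL.Axiom L φ → CPL.Deduces L Γ φ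
  | prem {φ : S} : φ ∈ Γ → CPL.Deduces L Γ φ
  | mp {φ ψ : S} : CPL.Deduces L Γ φ → CPL.Deduces L Γ (L.sub ψ φ) → CPL.Deduces L Γ ψ

/-- truncated addition -/
def CPL.padd (L : CPL S) (x y : S) : S := L.neg (L.sub (L.neg x) y)

/-- `k`-fold truncated sum of `x` (base: the provably-zero formula `x ∸ x`) -/
def CPL.nsum (L : CPL S) (x : S) : ℕ → S
  | 0 => L.sub x x
  | n+1 => L.padd (L.nsum x n) x

/-- `eps θ m` has truth value `2⁻ᵐ` -/
def CPL.eps (L : CPL S) (θ : S) : ℕ → S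
  | 0 => L.neg (L.sub θ θ)
  | m+1 => L.half (L.eps θ m)

/-- `con θ m k` has truth value `min (k/2^m) 1` -/
def CPL.con (L : CPL S) (θ : S) (m k : ℕ) : S := L.nsum (L.eps θ m) k

section Syntactic

variable (L : CPL S) (Γ : Set S)

local notation a " ⊖ " b => L.sub a b

/-- `a ≼ b` -/
def DLe (a b : S) : Prop := CPL.Deduces L Γ (L.sub a b)

/-- interprovable inequality -/
def DEq' (a b : S) : Prop := DLe L Γ a b ∧ DLe L Γ b a

variable {L Γ}

local infix:50 " ≼ " => DLe L Γ
local notation "⊢ " a => CPL.Deduces L Γ a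

namespace CL

theorem axm {a : S} (h : CPL.Axiom L a) : ⊢ a := CPL.Deduces.ax h

theorem a1 (a b : S) : (L.sub a b) ≼ a := axm (CPL.Axiom.a1 a b)
theorem a2 (a b c : S) : (L.sub (L.sub c a) (L.sub c b)) ≼ (L.sub b a) := axm (CPL.Axiom.a2 a b c)
theorem a4 (a b : S) : (L.sub a b) ≼ (L.sub (L.neg b) (L.neg a)) := axm (CPL.Axiom.a4 a b)
theorem a5 (a : S) : (L.half a) ≼ (L.sub a (L.half a)) := axm (CPL.Axiom.a5 a)
theorem a6 (a : S) : (L.sub a (L.half a)) ≼ (L.half a) := axm (CPL.Axiom.a6 a)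

theorem mp {a b : S} (h1 : ⊢ a) (h2 : b ≼ a) : ⊢ b := CPL.Deduces.mp h1 h2

/-- antitone in second argument -/
theorem anti {a b : S} (c : S) (h : b ≼ a) : (L.sub c a) ≼ (L.sub c b) := mp h (a2 a b c)

theorem trans {a b c : S} (h1 : a ≼ b) (h2 : b ≼ c) : a ≼ c := mp h1 (anti a h2)

/-- if `⊢ y` then `x ≼ x ∸ y` -/
theorem weaksub {y : S} (x : S) (h : ⊢ y) : x ≼ (L.sub x y) := by
  have h3 : (L.sub x (L.sub x y)) ≼ (L.sub y (L.sub y x)) := axm (CPL.Axiom.a3 x y)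
  exact mp h (trans h3 (a1 y (L.sub y x)))

theorem refl (a : S) : a ≼ a :=
  trans (weaksub a (axm (CPL.Axiom.a1 a a))) (a1 a (L.sub (L.sub a a) a))

/-- provable implies below everything -/
theorem le_of_prov {a : S} (b : S) (h : ⊢ a) : a ≼ b := mp h (a1 a b)

/-- monotone in first argument -/
theorem mono1 {a b : S} (c : S) (h : a ≼ b) : (L.sub a c) ≼ (L.sub b c) :=
  trans (weaksub (L.sub a c) h) (a2 c b a)

theorem mono {a b c d : S} (h1 : a ≼ b) (h2 : d ≼ c) : (L.sub a c) ≼ (L.sub b d) :=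
  trans (mono1 c h1) (anti b h2)


theorem a3' (a b : S) : DLe L Γ (L.sub a (L.sub a b)) (L.sub b (L.sub b a)) :=
  axm (CPL.Axiom.a3 a b)

theorem dn1 (a : S) : CPL.Deduces L Γ (L.sub a (L.neg (L.neg a))) := by
  have p1 : CPL.Deduces L Γ (L.sub (L.sub a (L.sub (L.sub a a) a)) a) := CL.axm (CPL.Axiom.a1 a (L.sub (L.sub a a) a))
  have p2 : CPL.Deduces L Γ (L.sub (L.sub a a) a) := CL.axm (CPL.Axiom.a1 a a)
  have e3 : DLe L Γ a (L.sub a (L.sub (L.sub a a) a)) := CL.weaksub a p2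
  have e4 : DLe L Γ (L.sub a a) (L.sub (L.sub a (L.sub (L.sub a a) a)) a) := CL.mono1 a e3
  have p5 : CPL.Deduces L Γ (L.sub a a) := CL.mp p1 e4
  have e6 : DLe L Γ (L.sub a (L.sub a a)) (L.sub (L.neg (L.sub a a)) (L.neg a)) := CL.a4 a (L.sub a a)
  have e7 : DLe L Γ (L.sub a (L.sub (L.neg (L.sub a a)) (L.neg a))) (L.sub a (L.sub a (L.sub a a))) := CL.anti a e6
  have e8 : DLe L Γ (L.sub a (L.sub a (L.sub a a))) (L.sub (L.sub a a) (L.sub (L.sub a a) a)) := CL.a3' a (L.sub a a)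
  have e9 : DLe L Γ (L.sub (L.sub a a) (L.sub (L.sub a a) a)) (L.sub a a) := CL.a1 (L.sub a a) (L.sub (L.sub a a) a)
  have e10 : DLe L Γ (L.sub a (L.sub a (L.sub a a))) (L.sub a a) := CL.trans e8 e9
  have e11 : DLe L Γ (L.sub a (L.sub (L.neg (L.sub a a)) (L.neg a))) (L.sub a a) := CL.trans e7 e10
  have p12 : CPL.Deduces L Γ (L.sub a (L.sub (L.neg (L.sub a a)) (L.neg a))) := CL.mp p5 e11
  have e13 : DLe L Γ (L.sub (L.neg (L.sub a a)) (L.neg a)) (L.sub (L.neg (L.neg a)) (L.neg (L.neg (L.sub a a)))) := CL.a4 (L.neg (L.sub a a)) (L.neg a)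
  have e14 : DLe L Γ (L.sub (L.neg (L.neg a)) (L.neg (L.neg (L.sub a a)))) (L.neg (L.neg a)) := CL.a1 (L.neg (L.neg a)) (L.neg (L.neg (L.sub a a)))
  have e15 : DLe L Γ (L.sub (L.neg (L.sub a a)) (L.neg a)) (L.neg (L.neg a)) := CL.trans e13 e14
  have e16 : DLe L Γ (L.sub a (L.neg (L.neg a))) (L.sub a (L.sub (L.neg (L.sub a a)) (L.neg a))) := CL.anti a e15
  have p17 : CPL.Deduces L Γ (L.sub a (L.neg (L.neg a))) := CL.mp p12 e16
  exact p17

theorem dn2 (a : S) : CPL.Deduces L Γ (L.sub (L.neg (L.neg a)) a) := by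
  have p1 : CPL.Deduces L Γ (L.sub (L.sub a (L.sub (L.sub a a) a)) a) := CL.axm (CPL.Axiom.a1 a (L.sub (L.sub a a) a))
  have p2 : CPL.Deduces L Γ (L.sub (L.sub a a) a) := CL.axm (CPL.Axiom.a1 a a)
  have e3 : DLe L Γ a (L.sub a (L.sub (L.sub a a) a)) := CL.weaksub a p2
  have e4 : DLe L Γ (L.sub a a) (L.sub (L.sub a (L.sub (L.sub a a) a)) a) := CL.mono1 a e3
  have p5 : CPL.Deduces L Γ (L.sub a a) := CL.mp p1 e4
  have e6 : DLe L Γ (L.sub (L.neg a) (L.sub (L.neg a) (L.sub a a))) (L.sub (L.sub a a) (L.sub (L.sub a a) (L.neg a))) := CL.a3' (L.neg a) (L.sub a a)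
  have e7 : DLe L Γ (L.sub (L.sub a a) (L.sub (L.sub a a) (L.neg a))) (L.sub a a) := CL.a1 (L.sub a a) (L.sub (L.sub a a) (L.neg a))
  have e8 : DLe L Γ (L.sub (L.neg a) (L.sub (L.neg a) (L.sub a a))) (L.sub a a) := CL.trans e6 e7
  have p9 : CPL.Deduces L Γ (L.sub (L.neg a) (L.sub (L.neg a) (L.sub a a))) := CL.mp p5 e8
  have e10 : DLe L Γ (L.sub (L.neg a) (L.sub a a)) (L.sub (L.neg (L.sub a a)) (L.neg (L.neg a))) := CL.a4 (L.neg a) (L.sub a a)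
  have e11 : DLe L Γ (L.sub (L.neg (L.sub a a)) (L.neg (L.neg a))) (L.sub (L.neg (L.neg (L.neg a))) (L.neg (L.neg (L.sub a a)))) := CL.a4 (L.neg (L.sub a a)) (L.neg (L.neg a))
  have e12 : DLe L Γ (L.sub (L.neg (L.neg (L.neg a))) (L.neg (L.neg (L.sub a a)))) (L.neg (L.neg (L.neg a))) := CL.a1 (L.neg (L.neg (L.neg a))) (L.neg (L.neg (L.sub a a)))
  have e13 : DLe L Γ (L.sub (L.neg (L.sub a a)) (L.neg (L.neg a))) (L.neg (L.neg (L.neg a))) := CL.trans e11 e12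
  have e14 : DLe L Γ (L.sub (L.neg a) (L.sub a a)) (L.neg (L.neg (L.neg a))) := CL.trans e10 e13
  have e15 : DLe L Γ (L.sub (L.neg a) (L.neg (L.neg (L.neg a)))) (L.sub (L.neg a) (L.sub (L.neg a) (L.sub a a))) := CL.anti (L.neg a) e14
  have p16 : CPL.Deduces L Γ (L.sub (L.neg a) (L.neg (L.neg (L.neg a)))) := CL.mp p9 e15
  have e17 : DLe L Γ (L.sub (L.neg (L.neg a)) a) (L.sub (L.neg a) (L.neg (L.neg (L.neg a)))) := CL.a4 (L.neg (L.neg a)) a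
  have p18 : CPL.Deduces L Γ (L.sub (L.neg (L.neg a)) a) := CL.mp p16 e17
  exact p18


theorem and_le (x c : S) : DLe L Γ (L.sub x (L.sub x c)) c :=
  trans (a3' x c) (a1 c (L.sub c x))

theorem exc (a b c : S) : DLe L Γ (L.sub (L.sub a b) c) (L.sub (L.sub a c) b) :=
  trans (anti (L.sub a b) (and_le a c)) (a2 b (L.sub a c) a)

theorem neg_anti {x y : S} (h : DLe L Γ x y) : DLe L Γ (L.neg y) (L.neg x) :=
  mp h (trans (a4 (L.neg y) (L.neg x))
    (trans (mono1 (L.neg (L.neg y)) (dn2 x)) (anti x (dn1 y))))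

theorem negflip {x y : S} (h : DLe L Γ x (L.neg y)) : DLe L Γ y (L.neg x) :=
  trans (dn1 y) (neg_anti h)

theorem subneg1 (a b : S) : CPL.Deduces L Γ (L.sub (L.sub a b) (L.neg b)) := by
  have p1 : CPL.Deduces L Γ (L.sub (L.sub a b) (L.sub (L.neg b) (L.neg a))) := CL.axm (CPL.Axiom.a4 a b)
  have e2 : DLe L Γ (L.sub (L.neg b) (L.neg a)) (L.neg b) := CL.a1 (L.neg b) (L.neg a)
  have e3 : DLe L Γ (L.sub (L.sub a b) (L.neg b)) (L.sub (L.sub a b) (L.sub (L.neg b) (L.neg a))) := CL.anti (L.sub a b) e2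
  have p4 : CPL.Deduces L Γ (L.sub (L.sub a b) (L.neg b)) := CL.mp p1 e3
  exact p4


theorem a4conv (p q : S) : DLe L Γ (L.sub (L.neg q) (L.neg p)) (L.sub p q) :=
  trans (a4 (L.neg q) (L.neg p)) (trans (mono1 (L.neg (L.neg q)) (dn2 p)) (anti p (dn1 q)))

theorem nexc (P Q : S) : DLe L Γ (L.sub (L.neg P) Q) (L.sub (L.neg Q) P) :=
  trans (anti (L.neg P) (dn2 Q)) (a4conv (L.neg Q) P)

theorem add_comm_le (x y : S) : DLe L Γ (L.padd x y) (L.padd y x) :=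
  neg_anti (nexc y x)

theorem add_mono {x x' y y' : S} (hx : DLe L Γ x x') (hy : DLe L Γ y y') :
    DLe L Γ (L.padd x y) (L.padd x' y') :=
  neg_anti (mono (neg_anti hx) hy)

theorem le_addr (y x : S) : DLe L Γ y (L.padd y x) :=
  negflip (a1 (L.neg y) x)

theorem le_addl (y x : S) : DLe L Γ y (L.padd x y) :=
  trans (le_addr y x) (add_comm_le y x)

theorem unit {y : S} (φ : S) (h : CPL.Deduces L Γ y) : DLe L Γ φ (L.neg y) :=
  negflip (le_of_prov (L.neg φ) h)

theorem addP {x y : S} (hx : CPL.Deduces L Γ x) (hy : CPL.Deduces L Γ y) :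
    CPL.Deduces L Γ (L.padd x y) :=
  mp hx (trans (neg_anti (weaksub (L.neg x) hy)) (dn2 x))

theorem add_elim {x : S} (y : S) (hx : CPL.Deduces L Γ x) : DLe L Γ (L.padd y x) y :=
  trans (neg_anti (weaksub (L.neg y) hx)) (dn2 y)

theorem add_elim' {x : S} (y : S) (hx : CPL.Deduces L Γ x) : DLe L Γ (L.padd x y) y :=
  trans (add_comm_le x y) (add_elim y hx)

theorem r1 (a b : S) : DLe L Γ a (L.padd (L.sub a b) b) := by
  have s1 : DLe L Γ (L.sub a (L.padd (L.sub a b) b)) (L.sub (L.neg (L.neg a)) (L.neg (L.sub (L.neg (L.sub a b)) b))) :=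
    mono1 _ (dn1 a)
  have s2 : DLe L Γ (L.sub (L.neg (L.neg a)) (L.neg (L.sub (L.neg (L.sub a b)) b))) (L.sub (L.sub (L.neg (L.sub a b)) b) (L.neg a)) :=
    a4conv (L.sub (L.neg (L.sub a b)) b) (L.neg a)
  have s3 : DLe L Γ (L.sub (L.sub (L.neg (L.sub a b)) b) (L.neg a)) (L.sub (L.sub (L.neg (L.sub a b)) (L.neg a)) b) :=
    exc (L.neg (L.sub a b)) b (L.neg a)
  have s4 : DLe L Γ (L.sub (L.sub (L.neg (L.sub a b)) (L.neg a)) b) (L.sub (L.sub a (L.sub a b)) b) :=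
    mono1 b (a4conv a (L.sub a b))
  have s5 : DLe L Γ (L.sub (L.sub a (L.sub a b)) b) (L.sub (L.sub a b) (L.sub a b)) :=
    exc a (L.sub a b) b
  exact mp (refl (L.sub a b)) (trans s1 (trans s2 (trans s3 (trans s4 s5))))

theorem r2 (x y : S) : DLe L Γ (L.sub (L.padd x y) y) x :=
  trans (negflip (r1 (L.neg x) y)) (dn2 x)

theorem adj1 {x y z : S} (h : DLe L Γ (L.sub x y) z) : DLe L Γ x (L.padd z y) :=
  trans (r1 x y) (add_mono h (refl y))

theorem adj2 {x y z : S} (h : DLe L Γ x (L.padd z y)) : DLe L Γ (L.sub x y) z :=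
  trans (mono1 y h) (r2 z y)

theorem clin (x y : S) : DLe L Γ (L.sub (L.neg y) (L.sub x y)) (L.sub (L.neg x) (L.sub y x)) :=
  trans (anti (L.neg y) (a4conv x y)) (trans (a3' (L.neg y) (L.neg x)) (anti (L.neg x) (a4 y x)))

theorem swap2 (x y : S) : DLe L Γ (L.sub (L.neg y) (L.sub x y)) (L.sub (L.neg (L.sub y x)) x) :=
  trans (clin x y) (nexc x (L.sub y x))

theorem vc' (a b : S) : DLe L Γ (L.sub (L.neg (L.sub b a)) a) (L.sub (L.neg (L.sub a b)) b) :=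
  trans (nexc (L.sub b a) a) (swap2 b a)

theorem vcomm (a b : S) : DLe L Γ (L.padd (L.sub a b) b) (L.padd (L.sub b a) a) :=
  neg_anti (vc' a b)

theorem canc {x y : S} (h : DLe L Γ x (L.neg y)) : DLe L Γ x (L.sub (L.padd x y) y) := by
  have c1 : DLe L Γ x (L.sub x (L.sub y (L.neg x))) := weaksub x (negflip h)
  have c2 : DLe L Γ (L.sub x (L.sub y (L.neg x))) (L.sub (L.neg (L.neg x)) (L.sub y (L.neg x))) :=
    mono1 _ (dn1 x)
  have c3 : DLe L Γ (L.sub (L.neg (L.neg x)) (L.sub y (L.neg x))) (L.sub (L.neg y) (L.sub (L.neg x) y)) :=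
    clin y (L.neg x)
  exact trans c1 (trans c2 (trans c3 (nexc y (L.sub (L.neg x) y))))

theorem klem (a b : S) : DLe L Γ (L.sub a b) (L.sub (L.sub a b) (L.sub b a)) := by
  have k1 : DLe L Γ a (L.neg (L.sub b a)) := negflip (subneg1 b a)
  have k2 : DLe L Γ a (L.sub (L.padd a (L.sub b a)) (L.sub b a)) := canc k1
  have k3 : DLe L Γ (L.sub (L.padd a (L.sub b a)) (L.sub b a))
      (L.sub (L.padd (L.sub b a) a) (L.sub b a)) :=
    mono1 _ (add_comm_le a (L.sub b a))
  have k4 : DLe L Γ (L.sub (L.padd (L.sub b a) a) (L.sub b a))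
      (L.sub (L.padd (L.sub a b) b) (L.sub b a)) :=
    mono1 _ (vcomm b a)
  have k5 : DLe L Γ (L.sub a b)
      (L.sub (L.sub (L.padd (L.sub a b) b) (L.sub b a)) b) :=
    mono1 b (trans k2 (trans k3 k4))
  have k6 : DLe L Γ (L.sub (L.sub (L.padd (L.sub a b) b) (L.sub b a)) b)
      (L.sub (L.sub (L.padd (L.sub a b) b) b) (L.sub b a)) :=
    exc (L.padd (L.sub a b) b) (L.sub b a) b
  have k7 : DLe L Γ (L.sub (L.sub (L.padd (L.sub a b) b) b) (L.sub b a))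
      (L.sub (L.sub a b) (L.sub b a)) :=
    mono1 _ (r2 (L.sub a b) b)
  exact trans k5 (trans k6 (trans k7 (refl _)))

theorem rev {p q : S} (h : DLe L Γ (L.sub p q) (L.sub q p)) : DLe L Γ p q :=
  mp (klem p q) (weaksub (L.sub p q) h)

theorem meeti {X u w : S} (h1 : DLe L Γ X u) (h2 : DLe L Γ X w) :
    DLe L Γ X (L.sub u (L.sub u w)) := by
  have m1 : DLe L Γ X (L.sub X (L.sub X w)) := weaksub X h2
  have m3 : DLe L Γ (L.sub w (L.sub w X)) (L.sub w (L.sub w u)) := anti w (anti w h1)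
  exact trans m1 (trans (a3' X w) (trans m3 (a3' w u)))

theorem k2lem {p q q' : S} (hq : DLe L Γ q' q) :
    CPL.Deduces L Γ (L.sub (L.sub p q) (L.sub (L.sub p q) (L.sub q' p))) :=
  mp (klem p q) (anti (L.sub p q) (anti (L.sub p q) (mono1 p hq)))

theorem subnegr (A B : S) : DLe L Γ (L.sub A (L.neg B)) (L.sub B (L.neg A)) :=
  trans (mono1 (L.neg B) (dn1 A)) (a4conv B (L.neg A))

theorem sub_add1 (q y p : S) : DLe L Γ (L.sub q (L.padd y p)) (L.sub (L.sub q y) p) :=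
  trans (subnegr q (L.sub (L.neg y) p))
    (trans (exc (L.neg y) p (L.neg q)) (mono1 p (a4conv q y)))

theorem sub_add2 (q y p : S) : DLe L Γ (L.sub (L.sub q y) p) (L.sub q (L.padd y p)) :=
  trans (mono1 p (a4 q y))
    (trans (exc (L.neg y) (L.neg q) p) (subnegr (L.sub (L.neg y) p) q))

theorem assoc1 (x y p : S) : DLe L Γ (L.padd x (L.padd y p)) (L.padd (L.padd x y) p) :=
  neg_anti (trans (mono1 p (dn2 (L.sub (L.neg x) y))) (sub_add2 (L.neg x) y p))

theorem assoc2 (x y p : S) : DLe L Γ (L.padd (L.padd x y) p) (L.padd x (L.padd y p)) :=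
  neg_anti (trans (sub_add1 (L.neg x) y p) (mono1 p (dn1 (L.sub (L.neg x) y))))

theorem subadd2 (a b c : S) : DLe L Γ (L.sub (L.padd a b) c) (L.padd a (L.sub b c)) :=
  adj2 (trans (add_mono (refl a) (r1 b c)) (assoc1 a (L.sub b c) c))

theorem hmono {a b : S} (h : DLe L Γ a b) : DLe L Γ (L.half a) (L.half b) := by
  apply rev
  have hm1 : DLe L Γ (L.sub (L.half a) (L.half b)) (L.sub (L.sub a (L.half a)) (L.half b)) :=
    mono1 _ (a5 a)
  have hm2 : DLe L Γ (L.sub (L.sub a (L.half a)) (L.half b)) (L.sub (L.sub a (L.half b)) (L.half a)) :=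
    exc a (L.half a) (L.half b)
  have hm3 : DLe L Γ (L.sub (L.sub a (L.half b)) (L.half a)) (L.sub (L.sub b (L.half b)) (L.half a)) :=
    mono1 _ (mono1 _ h)
  have hm4 : DLe L Γ (L.sub (L.sub b (L.half b)) (L.half a)) (L.sub (L.half b) (L.half a)) :=
    mono1 _ (a6 b)
  exact trans hm1 (trans hm2 (trans hm3 hm4))

theorem half_le (a : S) : DLe L Γ (L.half a) a := trans (a5 a) (a1 a (L.half a))

theorem dbl1 (x : S) : DLe L Γ x (L.padd (L.half x) (L.half x)) :=
  trans (r1 x (L.half x)) (add_mono (a6 x) (refl (L.half x)))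

theorem dbl2neg (x : S) : DLe L Γ (L.neg x) (L.sub (L.neg (L.half x)) (L.half x)) := by
  have d1 : DLe L Γ (L.neg x) (L.sub (L.neg x) (L.sub (L.half x) x)) :=
    weaksub (L.neg x) (half_le x)
  have d2 : DLe L Γ (L.sub (L.neg x) (L.sub (L.half x) x))
      (L.sub (L.neg (L.half x)) (L.sub x (L.half x))) := clin (L.half x) x
  exact trans d1 (trans d2 (anti _ (a5 x)))

theorem dbl2 (x : S) : DLe L Γ (L.padd (L.half x) (L.half x)) x :=
  trans (neg_anti (dbl2neg x)) (dn2 x)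

theorem uniq1 {z t : S} (h1 : DLe L Γ z (L.sub t z)) : DLe L Γ z (L.half t) := by
  apply rev
  have u1 : DLe L Γ (L.sub z (L.half t)) (L.sub (L.sub t z) (L.half t)) := mono1 _ h1
  have u2 : DLe L Γ (L.sub (L.sub t z) (L.half t)) (L.sub (L.sub t (L.half t)) z) :=
    exc t z (L.half t)
  exact trans u1 (trans u2 (mono1 z (a6 t)))

theorem hadd2 (x y : S) : DLe L Γ (L.half (L.padd x y)) (L.padd (L.half x) (L.half y)) := by
  apply rev
  set w := L.padd x y with hw
  set q := L.padd (L.half x) (L.half y) with hq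
  have h1 : DLe L Γ (L.sub (L.half w) q) (L.sub (L.sub w (L.half w)) q) := mono1 _ (a5 w)
  have h2 : DLe L Γ (L.sub (L.sub w (L.half w)) q) (L.sub (L.sub w q) (L.half w)) :=
    exc w (L.half w) q
  have h4 : DLe L Γ (L.sub w (L.half x)) (L.padd y (L.sub x (L.half x))) :=
    trans (mono1 _ (add_comm_le x y)) (subadd2 y x (L.half x))
  have h5 : DLe L Γ (L.padd y (L.sub x (L.half x))) (L.padd (L.half x) y) :=
    trans (add_mono (refl y) (a6 x)) (add_comm_le y (L.half x))
  have h6 : DLe L Γ (L.sub w q) q := by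
    have h3 : DLe L Γ (L.sub w q) (L.sub (L.sub w (L.half x)) (L.half y)) :=
      sub_add1 w (L.half x) (L.half y)
    have h7 : DLe L Γ (L.sub (L.sub w (L.half x)) (L.half y)) (L.sub (L.padd (L.half x) y) (L.half y)) :=
      mono1 _ (trans h4 h5)
    have h8 : DLe L Γ (L.sub (L.padd (L.half x) y) (L.half y)) (L.padd (L.half x) (L.sub y (L.half y))) :=
      subadd2 (L.half x) y (L.half y)
    exact trans h3 (trans h7 (trans h8 (add_mono (refl (L.half x)) (a6 y))))
  exact trans h1 (trans h2 (mono1 (L.half w) h6))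

theorem halve (t u : S) :
    DLe L Γ (L.sub (L.half t) u) (L.half (L.sub t (L.padd u u))) := by
  have v1 : DLe L Γ t (L.padd (L.sub t (L.padd u u)) (L.padd u u)) :=
    adj1 (refl (L.sub t (L.padd u u)))
  have v5 : DLe L Γ (L.half t) (L.padd (L.half (L.sub t (L.padd u u))) u) := by
    refine trans (hmono v1) (trans (hadd2 _ _) (add_mono (refl _) ?_))
    exact trans (hadd2 u u) (dbl2 u)
  exact adj2 v5

theorem haddc2 {A B : S}
    (hz : DLe L Γ (L.padd (L.half A) (L.half B)) (L.neg (L.padd (L.half A) (L.half B)))) :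
    DLe L Γ (L.padd (L.half A) (L.half B)) (L.half (L.padd A B)) := by
  set z := L.padd (L.half A) (L.half B) with hzdef
  apply uniq1
  have abab : DLe L Γ (L.padd z z) (L.padd (L.padd (L.half A) (L.half A)) (L.padd (L.half B) (L.half B))) := by
    have s1 : DLe L Γ (L.padd z z) (L.padd (L.half A) (L.padd (L.half B) z)) := assoc2 _ _ _
    have s2 : DLe L Γ (L.padd (L.half B) z) (L.padd (L.padd (L.half B) (L.half A)) (L.half B)) :=
      assoc1 _ _ _
    have s3 : DLe L Γ (L.padd (L.padd (L.half B) (L.half A)) (L.half B))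
        (L.padd (L.half A) (L.padd (L.half B) (L.half B))) :=
      trans (add_mono (add_comm_le (L.half B) (L.half A)) (refl (L.half B)))
        (assoc2 (L.half A) (L.half B) (L.half B))
    have s4 : DLe L Γ (L.padd z z)
        (L.padd (L.half A) (L.padd (L.half A) (L.padd (L.half B) (L.half B)))) :=
      trans s1 (add_mono (refl (L.half A)) (trans s2 s3))
    exact trans s4 (assoc1 _ _ _)
  have hzz : DLe L Γ (L.padd z z) (L.padd A B) :=
    trans abab (add_mono (dbl2 A) (dbl2 B))
  exact trans (canc hz) (mono1 z hzz)



/-! ### equivalence -/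

theorem deq_refl (a : S) : DEq' L Γ a a := ⟨refl a, refl a⟩
theorem deq_symm {a b : S} (h : DEq' L Γ a b) : DEq' L Γ b a := ⟨h.2, h.1⟩
theorem deq_trans {a b c : S} (h1 : DEq' L Γ a b) (h2 : DEq' L Γ b c) : DEq' L Γ a c :=
  ⟨trans h1.1 h2.1, trans h2.2 h1.2⟩
theorem le_of_deq {a b : S} (h : DEq' L Γ a b) : DLe L Γ a b := h.1
theorem dle_congr {a b a' b' : S} (ha : DEq' L Γ a a') (hb : DEq' L Γ b b')
    (h : DLe L Γ a b) : DLe L Γ a' b' := trans ha.2 (trans h hb.1)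
theorem sub_cong {a b a' b' : S} (ha : DEq' L Γ a a') (hb : DEq' L Γ b b') :
    DEq' L Γ (L.sub a b) (L.sub a' b') :=
  ⟨mono ha.1 hb.2, mono ha.2 hb.1⟩
theorem neg_cong {a a' : S} (ha : DEq' L Γ a a') : DEq' L Γ (L.neg a) (L.neg a') :=
  ⟨neg_anti ha.2, neg_anti ha.1⟩
theorem half_cong {a a' : S} (ha : DEq' L Γ a a') : DEq' L Γ (L.half a) (L.half a') :=
  ⟨hmono ha.1, hmono ha.2⟩
theorem add_cong {a b a' b' : S} (ha : DEq' L Γ a a') (hb : DEq' L Γ b b') :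
    DEq' L Γ (L.padd a b) (L.padd a' b') :=
  ⟨add_mono ha.1 hb.1, add_mono ha.2 hb.2⟩
theorem prov_eq {a b : S} (ha : CPL.Deduces L Γ a) (hb : CPL.Deduces L Γ b) : DEq' L Γ a b :=
  ⟨le_of_prov b ha, le_of_prov a hb⟩
theorem add_comm_eq (x y : S) : DEq' L Γ (L.padd x y) (L.padd y x) :=
  ⟨add_comm_le x y, add_comm_le y x⟩
theorem assoc_eq (x y p : S) : DEq' L Γ (L.padd x (L.padd y p)) (L.padd (L.padd x y) p) :=
  ⟨assoc1 x y p, assoc2 x y p⟩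
theorem neg_add (x y : S) : DEq' L Γ (L.neg (L.padd x y)) (L.sub (L.neg x) y) :=
  ⟨dn2 _, dn1 _⟩
theorem neg_sub_eq (A B : S) : DEq' L Γ (L.neg (L.sub A B)) (L.padd (L.neg A) B) :=
  neg_cong (sub_cong ⟨dn1 A, dn2 A⟩ (deq_refl B))
theorem sub_add_eq (q y p : S) : DEq' L Γ (L.sub q (L.padd y p)) (L.sub (L.sub q y) p) :=
  ⟨sub_add1 q y p, sub_add2 q y p⟩
theorem sub_prov_eq {y : S} (x : S) (h : CPL.Deduces L Γ y) : DEq' L Γ (L.sub x y) x :=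
  ⟨a1 x y, weaksub x h⟩
theorem half_prov {x : S} (h : CPL.Deduces L Γ x) : CPL.Deduces L Γ (L.half x) :=
  mp h (half_le x)

/-! ### sums -/

theorem nsum_zero_prov (x : S) : CPL.Deduces L Γ (L.nsum x 0) := refl x

theorem add_zero_eq (y x : S) : DEq' L Γ (L.padd y (L.nsum x 0)) y :=
  ⟨add_elim y (nsum_zero_prov x), le_addr y _⟩

theorem zero_add_eq (y x : S) : DEq' L Γ (L.padd (L.nsum x 0) y) y :=
  deq_trans (add_comm_eq _ _) (add_zero_eq y x)

theorem nsum_add (x : S) (j k : ℕ) :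
    DEq' L Γ (L.nsum x (j + k)) (L.padd (L.nsum x j) (L.nsum x k)) := by
  induction k with
  | zero => exact deq_symm (add_zero_eq _ x)
  | succ k ih =>
    show DEq' L Γ (L.padd (L.nsum x (j+k)) x) _
    exact deq_trans (add_cong ih (deq_refl x)) (deq_symm (assoc_eq _ _ _))

theorem nsum_cnt_mono (x : S) {k k' : ℕ} (h : k ≤ k') : DLe L Γ (L.nsum x k) (L.nsum x k') := by
  induction k' with
  | zero =>
    have hk0 : k = 0 := by omega
    subst hk0; exact refl _
  | succ k' ih =>
    rcases Nat.lt_or_ge k (k'+1) with h'|h'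
    · exact trans (ih (by omega)) (le_addr _ x)
    · have : k = k' + 1 := by omega
      subst this; exact refl _

theorem nsum_mono {x y : S} (k : ℕ) (h : DLe L Γ x y) : DLe L Γ (L.nsum x k) (L.nsum y k) := by
  induction k with
  | zero => exact le_of_prov _ (nsum_zero_prov x)
  | succ k ih => exact add_mono ih h

theorem nsum_cong {x y : S} (k : ℕ) (h : DEq' L Γ x y) :
    DEq' L Γ (L.nsum x k) (L.nsum y k) := ⟨nsum_mono k h.1, nsum_mono k h.2⟩

theorem nsum_one (x : S) : DEq' L Γ (L.nsum x 1) x := zero_add_eq x x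

theorem nsum_double (x : S) (k : ℕ) :
    DEq' L Γ (L.nsum x (2 * k)) (L.nsum (L.padd x x) k) := by
  induction k with
  | zero => exact prov_eq (nsum_zero_prov x) (nsum_zero_prov _)
  | succ k ih =>
    have h1 : DEq' L Γ (L.nsum x (2*(k+1))) (L.padd (L.nsum x (2*k)) (L.nsum x 2)) := by
      have : 2*(k+1) = 2*k + 2 := by ring
      rw [this]; exact nsum_add x (2*k) 2
    have h2 : DEq' L Γ (L.nsum x 2) (L.padd x x) := by
      show DEq' L Γ (L.padd (L.nsum x 1) x) _
      exact add_cong (nsum_one x) (deq_refl x)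
    exact deq_trans h1 (add_cong ih h2)

theorem amplify {x : S} (k : ℕ) (h : CPL.Deduces L Γ x) : CPL.Deduces L Γ (L.nsum x k) := by
  induction k with
  | zero => exact nsum_zero_prov x
  | succ k ih => exact addP ih h

/-! ### constants -/

theorem eps_dbl (θ : S) (m : ℕ) :
    DEq' L Γ (L.padd (L.eps θ (m+1)) (L.eps θ (m+1))) (L.eps θ m) :=
  ⟨dbl2 (L.eps θ m), dbl1 (L.eps θ m)⟩

theorem con_double (θ : S) (m k : ℕ) :
    DEq' L Γ (L.con θ (m+1) (2*k)) (L.con θ m k) :=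
  deq_trans (nsum_double _ k) (nsum_cong k (eps_dbl θ m))

theorem con_pow (θ : S) (m k d : ℕ) :
    DEq' L Γ (L.con θ (m+d) (2^d * k)) (L.con θ m k) := by
  induction d with
  | zero => simp [pow_zero, one_mul]; exact deq_refl _
  | succ d ih =>
    have : 2^(d+1) * k = 2 * (2^d * k) := by ring
    rw [this]
    exact deq_trans (con_double θ (m+d) (2^d * k)) ih

theorem con_one_eq (θ : S) (m : ℕ) : DEq' L Γ (L.con θ m (2^m)) (L.eps θ 0) := by
  induction m with
  | zero => exact nsum_one _
  | succ m ih =>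
    have : (2:ℕ)^(m+1) = 2 * 2^m := by ring
    rw [this]
    exact deq_trans (con_double θ m (2^m)) ih

theorem le_one (θ φ : S) : DLe L Γ φ (L.eps θ 0) := unit φ (refl θ)

theorem neg_half_eq (x : S) :
    DEq' L Γ (L.neg (L.half x)) (L.padd (L.neg x) (L.half x)) :=
  deq_trans (neg_cong ⟨a5 x, a6 x⟩) (neg_sub_eq x (L.half x))

theorem neg_eps (θ : S) (m : ℕ) :
    DEq' L Γ (L.neg (L.eps θ m)) (L.con θ m (2^m - 1)) := by
  induction m with
  | zero =>
    exact prov_eq (mp (refl θ) (dn2 _)) (nsum_zero_prov _)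
  | succ m ih =>
    have h1 : DEq' L Γ (L.neg (L.eps θ (m+1)))
        (L.padd (L.neg (L.eps θ m)) (L.eps θ (m+1))) := neg_half_eq (L.eps θ m)
    have h2 : DEq' L Γ (L.padd (L.neg (L.eps θ m)) (L.eps θ (m+1)))
        (L.padd (L.con θ (m+1) (2^(m+1) - 2)) (L.eps θ (m+1))) := by
      refine add_cong (deq_trans ih ?_) (deq_refl _)
      have : 2^(m+1) - 2 = 2 * (2^m - 1) := by
        have : (1:ℕ) ≤ 2^m := Nat.one_le_two_pow
        omega
      rw [this]
      exact deq_symm (con_double θ m (2^m - 1))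
    have h3 : (2:ℕ)^(m+1) - 1 = (2^(m+1) - 2) + 1 := by
      have : (2:ℕ) ≤ 2^(m+1) := by
        have : (2:ℕ)^1 ≤ 2^(m+1) := Nat.pow_le_pow_right (by norm_num) (by omega)
        simpa using this
      omega
    rw [h3]
    exact deq_trans h1 h2

theorem con_le_neg_eps (θ : S) {m k : ℕ} (hk : k + 1 ≤ 2^m) :
    DLe L Γ (L.con θ m k) (L.neg (L.eps θ m)) :=
  trans (nsum_cnt_mono _ (by omega : k ≤ 2^m - 1)) (neg_eps θ m).2

theorem csub1 (θ : S) {m j : ℕ} (hj : j + 1 ≤ 2^m) :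
    DEq' L Γ (L.sub (L.con θ m (j+1)) (L.eps θ m)) (L.con θ m j) :=
  ⟨r2 _ _, canc (con_le_neg_eps θ hj)⟩

theorem neg_con (θ : S) {m k : ℕ} (hk : k ≤ 2^m) :
    DEq' L Γ (L.neg (L.con θ m k)) (L.con θ m (2^m - k)) := by
  induction k with
  | zero =>
    simp only [Nat.sub_zero]
    exact deq_trans (neg_cong (prov_eq (nsum_zero_prov (L.eps θ m)) (refl θ)))
      (deq_symm (con_one_eq θ m))
  | succ k ih =>
    have hk' : k ≤ 2^m := by omega
    have h1 : DEq' L Γ (L.neg (L.con θ m (k+1))) (L.sub (L.neg (L.con θ m k)) (L.eps θ m)) :=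
      neg_add _ _
    have h2 : DEq' L Γ (L.sub (L.neg (L.con θ m k)) (L.eps θ m))
        (L.sub (L.con θ m (2^m - k)) (L.eps θ m)) :=
      sub_cong (ih hk') (deq_refl _)
    have h3 : (2:ℕ)^m - k = (2^m - (k+1)) + 1 := by omega
    rw [h3] at h2
    exact deq_trans h1 (deq_trans h2 (csub1 θ (by omega)))

theorem csub (θ : S) {m j k : ℕ} (hjk : j ≤ k) (hk : k ≤ 2^m) :
    DEq' L Γ (L.sub (L.con θ m k) (L.con θ m j)) (L.con θ m (k - j)) := by
  induction j with
  | zero =>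
    simpa using (sub_prov_eq (L.con θ m k) (nsum_zero_prov (L.eps θ m)) :
      DEq' L Γ (L.sub (L.con θ m k) (L.con θ m 0)) (L.con θ m k))
  | succ j ih =>
    have h1 : DEq' L Γ (L.sub (L.con θ m k) (L.con θ m (j+1)))
        (L.sub (L.sub (L.con θ m k) (L.con θ m j)) (L.eps θ m)) :=
      sub_add_eq _ _ _
    have h2 : DEq' L Γ (L.sub (L.sub (L.con θ m k) (L.con θ m j)) (L.eps θ m))
        (L.sub (L.con θ m (k - j)) (L.eps θ m)) := sub_cong (ih (by omega)) (deq_refl _)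
    have h3 : k - j = (k - (j+1)) + 1 := by omega
    rw [h3] at h2
    exact deq_trans h1 (deq_trans h2 (csub1 θ (by omega)))

theorem chalf (θ : S) {m k : ℕ} (hk : k ≤ 2^m) :
    DEq' L Γ (L.half (L.con θ m k)) (L.con θ (m+1) k) := by
  induction k with
  | zero => exact prov_eq (half_prov (nsum_zero_prov _)) (nsum_zero_prov _)
  | succ k ih =>
    have hk' : k ≤ 2^m := by omega
    have hz0 : DEq' L Γ (L.padd (L.half (L.con θ m k)) (L.half (L.eps θ m)))
        (L.con θ (m+1) (k+1)) := add_cong (ih hk') (deq_refl _)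
    have hzneg : DLe L Γ (L.padd (L.half (L.con θ m k)) (L.half (L.eps θ m)))
        (L.neg (L.padd (L.half (L.con θ m k)) (L.half (L.eps θ m)))) := by
      refine dle_congr (deq_symm hz0) (deq_symm (neg_cong hz0)) ?_
      refine trans (nsum_cnt_mono _ (by
        have : (2:ℕ)^(m+1) = 2 * 2^m := by ring
        omega : k + 1 ≤ 2^(m+1) - (k+1)))
        (neg_con θ (by
          have : (2:ℕ)^(m+1) = 2 * 2^m := by ring
          omega : k + 1 ≤ 2^(m+1))).2
    constructor
    · exact trans (hadd2 _ _) hz0.1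
    · exact trans hz0.2 (haddc2 hzneg)

/-! ### inconsistency lemmas -/

theorem all_of_o {θ : S} (h : CPL.Deduces L Γ (L.eps θ 0)) (φ : S) : CPL.Deduces L Γ φ :=
  mp h (le_one θ φ)

theorem all_of_eps {θ : S} {m : ℕ} (h : CPL.Deduces L Γ (L.eps θ m)) (φ : S) :
    CPL.Deduces L Γ φ :=
  all_of_o (mp (amplify (2^m) h) (con_one_eq θ m).2) φ

theorem all_of_con_lt {θ : S} {m j k : ℕ} (hjk : j < k) (hk : k ≤ 2^m)
    (h : CPL.Deduces L Γ (L.sub (L.con θ m k) (L.con θ m j))) (φ : S) :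
    CPL.Deduces L Γ φ := by
  have h1 : CPL.Deduces L Γ (L.con θ m (k - j)) := mp h (csub θ (by omega) hk).2
  have h2 : CPL.Deduces L Γ (L.eps θ m) :=
    mp h1 (trans (nsum_one (L.eps θ m)).2 (nsum_cnt_mono _ (by omega : 1 ≤ k - j)))
  exact all_of_eps h2 φ


/-! ### weak deduction theorem -/

theorem wdt {ψ χ : S} (h : CPL.Deduces L (insert ψ Γ) χ) :
    ∃ n : ℕ, DLe L Γ χ (L.nsum ψ n) := by
  induction h with
  | ax hφ => exact ⟨0, le_of_prov _ (axm hφ)⟩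
  | @prem φ hφ =>
    rcases hφ with hφ | hφ
    · subst hφ; exact ⟨1, (nsum_one φ).2⟩
    · exact ⟨0, le_of_prov _ (CPL.Deduces.prem hφ)⟩
  | @mp φ χ h1 h2 ih1 ih2 =>
    obtain ⟨n, hn⟩ := ih1
    obtain ⟨m, hm⟩ := ih2
    exact ⟨m + n, trans (r1 χ φ) (trans (add_mono hm hn) (nsum_add ψ m n).2)⟩

theorem halve_step {t ψ : S} {n : ℕ} (h : CPL.Deduces L Γ (L.sub t (L.nsum ψ (2*n)))) :
    CPL.Deduces L Γ (L.sub (L.half t) (L.nsum ψ n)) := by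
  rw [(by ring : 2*n = n + n)] at h
  have h2 : CPL.Deduces L Γ (L.sub t (L.padd (L.nsum ψ n) (L.nsum ψ n))) :=
    mp h (sub_cong (deq_refl t) (nsum_add ψ n n)).2
  exact mp (half_prov h2) (halve t (L.nsum ψ n))

theorem iter_halve {ψ : S} : ∀ (M : ℕ) (t : S),
    CPL.Deduces L Γ (L.sub t (L.nsum ψ (2^M))) →
    CPL.Deduces L Γ (L.sub ((L.half)^[M] t) ψ) := by
  intro M
  induction M with
  | zero =>
    intro t h
    rw [pow_zero] at h
    simpa using mp h (sub_cong (deq_refl t) (nsum_one ψ)).2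
  | succ M ih =>
    intro t h
    have h1 : CPL.Deduces L Γ (L.sub (L.half t) (L.nsum ψ (2^M))) := by
      apply halve_step
      rwa [(by ring : 2 * 2^M = 2^(M+1))]
    have := ih (L.half t) h1
    rwa [← Function.iterate_succ_apply] at this

theorem eps_eq_iterate (θ : S) (M : ℕ) : L.eps θ M = (L.half)^[M] (L.eps θ 0) := by
  induction M with
  | zero => rfl
  | succ M ih => rw [Function.iterate_succ_apply', ← ih]; rfl

theorem eps_le_of_one_le {θ ψ : S} {M : ℕ}
    (h : CPL.Deduces L Γ (L.sub (L.eps θ 0) (L.nsum ψ (2^M)))) :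
    DLe L Γ (L.eps θ M) ψ := by
  have := iter_halve (Γ := Γ) M (L.eps θ 0) h
  rwa [← eps_eq_iterate] at this

end CL
end Syntactic

section Meta

variable {L : CPL S}

theorem CPL.Deduces.mono_set {Γ Γ' : Set S} (h : Γ ⊆ Γ') {φ : S}
    (hd : CPL.Deduces L Γ φ) : CPL.Deduces L Γ' φ := by
  induction hd with
  | ax hφ => exact CPL.Deduces.ax hφ
  | prem hφ => exact CPL.Deduces.prem (h hφ)
  | mp h1 h2 ih1 ih2 => exact CPL.Deduces.mp ih1 ih2

theorem CPL.Deduces.finite {Γ : Set S} {φ : S} (hd : CPL.Deduces L Γ φ) :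
    ∃ Γ₀ : Set S, Γ₀.Finite ∧ Γ₀ ⊆ Γ ∧ CPL.Deduces L Γ₀ φ := by
  induction hd with
  | @ax φ hφ => exact ⟨∅, Set.finite_empty, by simp, CPL.Deduces.ax hφ⟩
  | @prem φ hφ => exact ⟨{φ}, Set.finite_singleton φ, by simpa using hφ,
      CPL.Deduces.prem (by simp)⟩
  | @mp φ ψ h1 h2 ih1 ih2 =>
    obtain ⟨A, hfA, hA, hdA⟩ := ih1
    obtain ⟨B, hfB, hB, hdB⟩ := ih2
    exact ⟨A ∪ B, hfA.union hfB, Set.union_subset hA hB,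
      CPL.Deduces.mp (hdA.mono_set Set.subset_union_left)
        (hdB.mono_set Set.subset_union_right)⟩

/-- soundness of the deduction system -/
theorem sound {v : S → ℝ} (hv : L.IsTruthAssignment v) {Γ : Set S}
    (hΓ : ∀ φ ∈ Γ, v φ = 0) {φ : S} (hd : CPL.Deduces L Γ φ) : v φ = 0 := by
  obtain ⟨hrange, hneg, hhalf, hsub⟩ := hv
  have hax : ∀ ψ, CPL.Axiom L ψ → v ψ = 0 := by
    intro ψ hψ
    induction hψ with
    | a1 φ ψ =>
      rw [hsub, hsub]; apply max_eq_right
      simp only [max_def]; split_ifs <;>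
        linarith [(hrange φ).1, (hrange φ).2, (hrange ψ).1, (hrange ψ).2]
    | a2 φ ψ ρ =>
      rw [hsub, hsub, hsub, hsub, hsub]; apply max_eq_right
      simp only [max_def]; split_ifs <;>
        linarith [(hrange φ).1, (hrange φ).2, (hrange ψ).1, (hrange ψ).2,
          (hrange ρ).1, (hrange ρ).2]
    | a3 φ ψ =>
      simp only [CPL.land, hsub]; apply max_eq_right
      simp only [max_def]; split_ifs <;>
        linarith [(hrange φ).1, (hrange φ).2, (hrange ψ).1, (hrange ψ).2]
    | a4 φ ψ =>
      rw [hsub, hsub, hsub, hneg, hneg]; apply max_eq_right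
      simp only [max_def]; split_ifs <;>
        linarith [(hrange φ).1, (hrange φ).2, (hrange ψ).1, (hrange ψ).2]
    | a5 φ =>
      rw [hsub, hsub, hhalf]; apply max_eq_right
      simp only [max_def]; split_ifs <;>
        linarith [(hrange φ).1, (hrange φ).2]
    | a6 φ =>
      rw [hsub, hsub, hhalf]; apply max_eq_right
      simp only [max_def]; split_ifs <;>
        linarith [(hrange φ).1, (hrange φ).2]
  induction hd with
  | ax hφ => exact hax _ hφ
  | prem hφ => exact hΓ _ hφ
  | @mp φ ψ h1 h2 ih1 ih2 =>
    rw [hsub] at ih2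
    have h3 : v ψ - v φ ≤ 0 := by
      by_contra h
      push_neg at h
      rw [max_eq_left (le_of_lt h)] at ih2
      linarith
    have := (hrange ψ).1
    linarith [ih1 ▸ h3]

end Meta


section MaxCons

variable {L : CPL S} {θ : S}

theorem finite_subset_chain {α : Type*} {c : Set (Set α)}
    (hchain : IsChain (· ⊆ ·) c) (hne : c.Nonempty) {Γ₀ : Set α} (hfin : Γ₀.Finite) :
    Γ₀ ⊆ ⋃₀ c → ∃ t ∈ c, Γ₀ ⊆ t := by
  refine Set.Finite.induction_on (motive := fun s _ => s ⊆ ⋃₀ c → ∃ t ∈ c, s ⊆ t) Γ₀ hfin ?_ ?_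
  · intro _
    obtain ⟨t, ht⟩ := hne
    exact ⟨t, ht, by simp⟩
  · intro x s hxs hsfin ih hsub
    obtain ⟨t1, ht1, hst1⟩ := ih ((Set.subset_insert x s).trans hsub)
    obtain ⟨t2, ht2, hxt2⟩ : ∃ t ∈ c, x ∈ t := by
      have := hsub (Set.mem_insert x s)
      simpa [Set.mem_sUnion] using this
    rcases hchain.total ht1 ht2 with h12 | h21
    · exact ⟨t2, ht2, Set.insert_subset hxt2 (hst1.trans h12)⟩
    · exact ⟨t1, ht1, Set.insert_subset (h21 hxt2) hst1⟩

/-- existence of a maximal consistent extension -/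
theorem exists_maximal {Γ : Set S} (h : ¬ CPL.Deduces L Γ (L.eps θ 0)) :
    ∃ Δ : Set S, Γ ⊆ Δ ∧ ¬ CPL.Deduces L Δ (L.eps θ 0) ∧
      ∀ ψ : S, ¬ CPL.Deduces L (insert ψ Δ) (L.eps θ 0) → ψ ∈ Δ := by
  set 𝒮 : Set (Set S) := {Δ | Γ ⊆ Δ ∧ ¬ CPL.Deduces L Δ (L.eps θ 0)} with h𝒮
  have hzorn := zorn_subset_nonempty 𝒮 ?_ Γ ⟨subset_refl Γ, h⟩
  · obtain ⟨Δ, hΓΔ0, hmaxi⟩ := hzorn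
    obtain ⟨hΓΔ, hcons⟩ := hmaxi.prop
    refine ⟨Δ, hΓΔ, hcons, ?_⟩
    intro ψ hψ
    have hins : insert ψ Δ ∈ 𝒮 := ⟨hΓΔ.trans (Set.subset_insert ψ Δ), hψ⟩
    have : insert ψ Δ ⊆ Δ := hmaxi.2 hins (Set.subset_insert ψ Δ)
    exact this (Set.mem_insert ψ Δ)
  · intro c hc hchain hne
    refine ⟨⋃₀ c, ⟨?_, ?_⟩, fun s hs => Set.subset_sUnion_of_mem hs⟩
    · obtain ⟨t, ht⟩ := hne
      exact ((hc ht).1).trans (Set.subset_sUnion_of_mem ht)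
    · intro hded
      obtain ⟨Γ₀, hfin, hsub, hd0⟩ := hded.finite
      obtain ⟨t, htc, hsubt⟩ := finite_subset_chain hchain hne hfin hsub
      exact (hc htc).2 (hd0.mono_set hsubt)

end MaxCons


section Model

variable {L : CPL S} {θ : S} {Δ : Set S}

theorem dicho (hcons : ¬ CPL.Deduces L Δ (L.eps θ 0))
    (hmax : ∀ ψ : S, ¬ CPL.Deduces L (insert ψ Δ) (L.eps θ 0) → ψ ∈ Δ)
    {φ : S} {m j k : ℕ} (hjk : j < k)
    (h1 : ¬ DLe L Δ φ (L.con θ m k)) : DLe L Δ (L.con θ m j) φ := by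
  by_contra h2
  have hins : ∀ ψ : S, ¬ CPL.Deduces L Δ ψ →
      ∃ M : ℕ, DLe L Δ (L.eps θ M) ψ := by
    intro ψ hψ
    have hi : CPL.Deduces L (insert ψ Δ) (L.eps θ 0) := by
      by_contra hcon
      exact hψ (CPL.Deduces.prem (hmax ψ hcon))
    obtain ⟨n, hn⟩ := CL.wdt hi
    have hn' : DLe L Δ (L.eps θ 0) (L.nsum ψ (2^n)) :=
      CL.trans hn (CL.nsum_cnt_mono ψ (Nat.le_of_lt (Nat.lt_two_pow_self (n := n))))
    exact ⟨n, CL.eps_le_of_one_le hn'⟩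
  obtain ⟨M1, hM1⟩ := hins _ h1
  obtain ⟨M2, hM2⟩ := hins _ h2
  -- bring to a common level
  have heps_le : ∀ {i i' : ℕ}, i ≤ i' → DLe L Δ (L.eps θ i') (L.eps θ i) := by
    intro i i' h
    induction i' with
    | zero =>
      have : i = 0 := by omega
      subst this; exact CL.refl _
    | succ i' ih =>
      rcases Nat.lt_or_ge i (i'+1) with h' | h'
      · exact CL.trans (CL.half_le (L.eps θ i')) (ih (by omega))
      · have : i = i' + 1 := by omega
        subst this; exact CL.refl _
  set M := max M1 M2 with hM
  have h1' : DLe L Δ (L.eps θ M) (L.sub φ (L.con θ m k)) :=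
    CL.trans (heps_le (le_max_left M1 M2)) hM1
  have h2' : DLe L Δ (L.eps θ M) (L.sub (L.con θ m j) φ) :=
    CL.trans (heps_le (le_max_right M1 M2)) hM2
  have hq : DLe L Δ (L.con θ m j) (L.con θ m k) :=
    CL.nsum_cnt_mono _ (Nat.le_of_lt hjk)
  have hK := CL.k2lem (p := φ) hq
  have : CPL.Deduces L Δ (L.eps θ M) := CL.mp hK (CL.meeti h1' h2')
  exact hcons (CL.all_of_eps this _)

end Model


/-! ### the canonical valuation -/

/-- dyadic upper bounds of `φ` over `Δ` -/
def upSet (L : CPL S) (θ : S) (Δ : Set S) (φ : S) : Set ℝ :=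
  {x | ∃ m k : ℕ, k ≤ 2^m ∧ x = (k : ℝ)/2^m ∧ DLe L Δ φ (L.con θ m k)}

/-- the canonical valuation -/
noncomputable def vD (L : CPL S) (θ : S) (Δ : Set S) (φ : S) : ℝ :=
  sInf (upSet L θ Δ φ)

section Valuation

variable {L : CPL S} {θ : S} {Δ : Set S}

theorem up_mem {φ : S} {m k : ℕ} (hk : k ≤ 2^m) (h : DLe L Δ φ (L.con θ m k)) :
    (k : ℝ)/2^m ∈ upSet L θ Δ φ := ⟨m, k, hk, rfl, h⟩

theorem one_mem_up (φ : S) : (1 : ℝ) ∈ upSet L θ Δ φ := by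
  refine ⟨0, 1, by norm_num, by norm_num, ?_⟩
  exact CL.trans (CL.le_one θ φ) (CL.nsum_one (L.eps θ 0)).2

theorem up_nonneg {φ : S} {x : ℝ} (hx : x ∈ upSet L θ Δ φ) : 0 ≤ x := by
  obtain ⟨m, k, hk, rfl, -⟩ := hx
  positivity

theorem up_bddBelow (φ : S) : BddBelow (upSet L θ Δ φ) :=
  ⟨0, fun _ hx => up_nonneg hx⟩

theorem vD_nonneg (φ : S) : 0 ≤ vD L θ Δ φ :=
  le_csInf ⟨1, one_mem_up φ⟩ fun _ hx => up_nonneg hx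

theorem vD_le_one (φ : S) : vD L θ Δ φ ≤ 1 :=
  csInf_le (up_bddBelow φ) (one_mem_up φ)

theorem vD_le_of_up {φ : S} {m k : ℕ} (hk : k ≤ 2^m) (h : DLe L Δ φ (L.con θ m k)) :
    vD L θ Δ φ ≤ (k : ℝ)/2^m :=
  csInf_le (up_bddBelow φ) (up_mem hk h)

theorem vD_of_prov {φ : S} (h : CPL.Deduces L Δ φ) : vD L θ Δ φ = 0 := by
  refine le_antisymm ?_ (vD_nonneg φ)
  have := vD_le_of_up (θ := θ) (m := 0) (k := 0) (by norm_num)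
    (CL.le_of_prov (L.con θ 0 0) h)
  simpa using this

/-- a dyadic lower bound is below every dyadic upper bound -/
theorem lo_le_up (hcons : ¬ CPL.Deduces L Δ (L.eps θ 0))
    {φ : S} {n j m k : ℕ} (hj : j ≤ 2^n) (hk : k ≤ 2^m)
    (hlo : DLe L Δ (L.con θ n j) φ) (hup : DLe L Δ φ (L.con θ m k)) :
    (j : ℝ)/2^n ≤ (k : ℝ)/2^m := by
  by_contra hlt
  push_neg at hlt
  -- common denominator
  have hJ : DEq' L Δ (L.con θ (n+m) (2^m * j)) (L.con θ n j) := CL.con_pow θ n j m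
  have hK : DEq' L Δ (L.con θ (m+n) (2^n * k)) (L.con θ m k) := CL.con_pow θ m k n
  rw [Nat.add_comm m n] at hK
  have hcmp : 2^n * k < 2^m * j := by
    have h2m : (0:ℝ) < (2:ℝ)^m := by positivity
    have h2n : (0:ℝ) < (2:ℝ)^n := by positivity
    have hR : (k : ℝ) * 2^n < (j : ℝ) * 2^m := by
      rw [div_lt_div_iff₀ h2m h2n] at hlt
      linarith
    have hR2 : ((2^n * k : ℕ) : ℝ) < ((2^m * j : ℕ) : ℝ) := by push_cast; nlinarith
    exact_mod_cast hR2
  have hbig : DLe L Δ (L.con θ (n+m) (2^m * j)) (L.con θ (n+m) (2^n * k)) :=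
    CL.trans hJ.1 (CL.trans hlo (CL.trans hup hK.2))
  have hle : 2^m * j ≤ 2^(n+m) := by
    have := Nat.mul_le_mul_left (2^m) hj
    have h2 : 2^m * 2^n = 2^(n+m) := by rw [← pow_add]; ring_nf
    omega
  exact hcons (CL.all_of_con_lt hcmp hle hbig _)

/-- dyadic density -/
theorem exists_dyadic_btwn {x y : ℝ} (hx : 0 ≤ x) (hxy : x < y) (hy : y ≤ 1) :
    ∃ m k : ℕ, k ≤ 2^m ∧ x < (k:ℝ)/2^m ∧ (k:ℝ)/2^m < y := by
  obtain ⟨m, hm⟩ := exists_pow_lt_of_lt_one (by linarith : (0:ℝ) < y - x)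
    (by norm_num : (1:ℝ)/2 < 1)
  have h2m : (0:ℝ) < (2:ℝ)^m := by positivity
  have hm' : 1/(2:ℝ)^m < y - x := by
    calc 1/(2:ℝ)^m = ((1:ℝ)/2)^m := by rw [div_pow, one_pow]
    _ < y - x := hm
  set k := ⌊x * 2^m⌋₊ + 1 with hkdef
  have hfl : (⌊x * 2^m⌋₊ : ℝ) ≤ x * 2^m := Nat.floor_le (by positivity)
  have hfl2 : x * 2^m < ⌊x * 2^m⌋₊ + 1 := Nat.lt_floor_add_one _
  have hk1 : x < (k:ℝ)/2^m := by
    rw [lt_div_iff₀ h2m, hkdef]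
    push_cast
    linarith
  have hk2 : (k:ℝ)/2^m < y := by
    rw [div_lt_iff₀ h2m, hkdef]
    push_cast
    have : (y - x) * 2^m > 1 := by
      rw [div_lt_iff₀ h2m] at hm'
      linarith [hm']
    nlinarith
  refine ⟨m, k, ?_, hk1, hk2⟩
  by_contra hcon
  push_neg at hcon
  have hc1 : ((2^m : ℕ) : ℝ) < (k : ℝ) := by exact_mod_cast hcon
  push_cast at hc1
  have hkR : (k:ℝ) = (⌊x * 2^m⌋₊ : ℝ) + 1 := by rw [hkdef]; push_cast; ring
  have hc2 : (1:ℝ) < (k:ℝ)/2^m := by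
    rw [lt_div_iff₀ h2m]; linarith [hkR]
  linarith [hy, hk2, hc2]

/-- the valuation is approximated from below by dyadic lower bounds -/
theorem exists_lo_near (hcons : ¬ CPL.Deduces L Δ (L.eps θ 0))
    (hmax : ∀ ψ : S, ¬ CPL.Deduces L (insert ψ Δ) (L.eps θ 0) → ψ ∈ Δ)
    (φ : S) {ε : ℝ} (hε : 0 < ε) :
    ∃ n j : ℕ, j ≤ 2^n ∧ DLe L Δ (L.con θ n j) φ ∧ vD L θ Δ φ - ε < (j:ℝ)/2^n := by
  rcases lt_or_ge (vD L θ Δ φ) ε with h | h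
  · refine ⟨0, 0, by norm_num, CL.le_of_prov φ (CL.nsum_zero_prov _), ?_⟩
    simp only [Nat.cast_zero, pow_zero, zero_div]
    linarith
  · have h1 : (0:ℝ) ≤ vD L θ Δ φ - ε := by linarith
    obtain ⟨m2, k2, hk2, hd2a, hd2b⟩ :=
      exists_dyadic_btwn h1 (by linarith : vD L θ Δ φ - ε < vD L θ Δ φ)
        (vD_le_one φ)
    obtain ⟨m1, k1, hk1, hd1a, hd1b⟩ :=
      exists_dyadic_btwn h1 hd2a (le_trans (le_of_lt hd2b) (vD_le_one φ))
    have hnot : ¬ DLe L Δ φ (L.con θ m2 k2) := by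
      intro hup
      have := vD_le_of_up hk2 hup
      linarith
    -- common denominator: k1/2^m1 < k2/2^m2
    have hcmp : 2^m2 * k1 < 2^m1 * k2 := by
      have h2m : (0:ℝ) < (2:ℝ)^m1 := by positivity
      have h2n : (0:ℝ) < (2:ℝ)^m2 := by positivity
      have : (k1:ℝ)/2^m1 < (k2:ℝ)/2^m2 := hd1b
      rw [div_lt_div_iff₀ h2m h2n] at this
      have hR2 : ((2^m2 * k1 : ℕ) : ℝ) < ((2^m1 * k2 : ℕ) : ℝ) := by push_cast; nlinarith
      exact_mod_cast hR2
    have hnot' : ¬ DLe L Δ φ (L.con θ (m2+m1) (2^m1 * k2)) := by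
      intro hup
      exact hnot (CL.trans hup (CL.con_pow θ m2 k2 m1).1)
    have hlo' : DLe L Δ (L.con θ (m2+m1) (2^m2 * k1)) φ :=
      dicho hcons hmax hcmp hnot'
    refine ⟨m2+m1, 2^m2 * k1, ?_, hlo', ?_⟩
    · calc 2^m2 * k1 ≤ 2^m2 * 2^m1 := Nat.mul_le_mul_left _ hk1
      _ = 2^(m2+m1) := (pow_add 2 m2 m1).symm
    · have : ((2^m2 * k1 : ℕ) : ℝ)/2^(m2+m1) = (k1:ℝ)/2^m1 := by
        push_cast
        rw [pow_add]
        field_simp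
      rw [this]
      linarith

theorem lo_le_vD (hcons : ¬ CPL.Deduces L Δ (L.eps θ 0))
    {φ : S} {n j : ℕ} (hj : j ≤ 2^n) (h : DLe L Δ (L.con θ n j) φ) :
    (j:ℝ)/2^n ≤ vD L θ Δ φ := by
  refine le_csInf ⟨1, one_mem_up φ⟩ ?_
  rintro x ⟨m, k, hk, rfl, hup⟩
  exact lo_le_up hcons hj hk h hup

theorem exists_up_near (φ : S) {ε : ℝ} (hε : 0 < ε) :
    ∃ m k : ℕ, k ≤ 2^m ∧ DLe L Δ φ (L.con θ m k) ∧ (k:ℝ)/2^m < vD L θ Δ φ + ε := by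
  have : sInf (upSet L θ Δ φ) < vD L θ Δ φ + ε := by
    have := vD_nonneg (L := L) (θ := θ) (Δ := Δ) φ
    unfold vD at *
    linarith
  obtain ⟨x, hx, hlt⟩ := exists_lt_of_csInf_lt ⟨1, one_mem_up φ⟩ this
  obtain ⟨m, k, hk, rfl, hup⟩ := hx
  exact ⟨m, k, hk, hup, hlt⟩

end Valuation


section Truth

variable {L : CPL S} {θ : S} {Δ : Set S}

private theorem le_of_eps' {a b : ℝ} (h : ∀ ε : ℝ, 0 < ε → a ≤ b + ε) : a ≤ b := by
  by_contra h'
  push_neg at h'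
  have := h ((a - b)/2) (by linarith)
  linarith

private theorem cast_pow_div {k m n : ℕ} : ((2^n * k : ℕ) : ℝ)/2^(m+n) = (k:ℝ)/2^m := by
  push_cast
  rw [pow_add]
  have h1 : (0:ℝ) < (2:ℝ)^m := by positivity
  have h2 : (0:ℝ) < (2:ℝ)^n := by positivity
  field_simp

theorem vD_neg (hcons : ¬ CPL.Deduces L Δ (L.eps θ 0))
    (hmax : ∀ ψ : S, ¬ CPL.Deduces L (insert ψ Δ) (L.eps θ 0) → ψ ∈ Δ)
    (φ : S) : vD L θ Δ (L.neg φ) = 1 - vD L θ Δ φ := by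
  apply le_antisymm
  · apply le_of_eps'
    intro ε hε
    obtain ⟨n, j, hj, hlo, hnear⟩ := exists_lo_near hcons hmax φ hε
    have hup : DLe L Δ (L.neg φ) (L.con θ n (2^n - j)) :=
      CL.trans (CL.neg_anti hlo) (CL.neg_con θ hj).1
    have := vD_le_of_up (by omega) hup
    have hcast : ((2^n - j : ℕ) : ℝ)/2^n = 1 - (j:ℝ)/2^n := by
      rw [Nat.cast_sub hj]
      have h1 : (0:ℝ) < (2:ℝ)^n := by positivity
      push_cast
      field_simp
    rw [hcast] at this
    linarith
  · apply le_of_eps'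
    intro ε hε
    obtain ⟨m, k, hk, hup, hnear⟩ := exists_up_near φ hε
    have hlo : DLe L Δ (L.con θ m (2^m - k)) (L.neg φ) :=
      CL.trans (CL.neg_con θ hk).2 (CL.neg_anti hup)
    have := lo_le_vD hcons (by omega) hlo
    have hcast : ((2^m - k : ℕ) : ℝ)/2^m = 1 - (k:ℝ)/2^m := by
      rw [Nat.cast_sub hk]
      have h1 : (0:ℝ) < (2:ℝ)^m := by positivity
      push_cast
      field_simp
    rw [hcast] at this
    linarith

theorem vD_half (hcons : ¬ CPL.Deduces L Δ (L.eps θ 0))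
    (hmax : ∀ ψ : S, ¬ CPL.Deduces L (insert ψ Δ) (L.eps θ 0) → ψ ∈ Δ)
    (φ : S) : vD L θ Δ (L.half φ) = vD L θ Δ φ / 2 := by
  apply le_antisymm
  · apply le_of_eps'
    intro ε hε
    obtain ⟨m, k, hk, hup, hnear⟩ := exists_up_near φ (by linarith : (0:ℝ) < ε)
    have hup2 : DLe L Δ (L.half φ) (L.con θ (m+1) k) :=
      CL.trans (CL.hmono hup) (CL.chalf θ hk).1
    have h1 := vD_le_of_up (by
      have : (2:ℕ)^m ≤ 2^(m+1) := Nat.pow_le_pow_right (by norm_num) (by omega)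
      omega) hup2
    have hcast : (k:ℝ)/2^(m+1) = ((k:ℝ)/2^m)/2 := by
      rw [pow_succ]
      have h2 : (0:ℝ) < (2:ℝ)^m := by positivity
      field_simp
    rw [hcast] at h1
    linarith
  · apply le_of_eps'
    intro ε hε
    obtain ⟨n, j, hj, hlo, hnear⟩ := exists_lo_near hcons hmax φ (by linarith : (0:ℝ) < ε)
    have hlo2 : DLe L Δ (L.con θ (n+1) j) (L.half φ) :=
      CL.trans (CL.chalf θ hj).2 (CL.hmono hlo)
    have h1 := lo_le_vD hcons (by
      have : (2:ℕ)^n ≤ 2^(n+1) := Nat.pow_le_pow_right (by norm_num) (by omega)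
      omega) hlo2
    have hcast : (j:ℝ)/2^(n+1) = ((j:ℝ)/2^n)/2 := by
      rw [pow_succ]
      have h2 : (0:ℝ) < (2:ℝ)^n := by positivity
      field_simp
    rw [hcast] at h1
    linarith

theorem vD_sub (hcons : ¬ CPL.Deduces L Δ (L.eps θ 0))
    (hmax : ∀ ψ : S, ¬ CPL.Deduces L (insert ψ Δ) (L.eps θ 0) → ψ ∈ Δ)
    (φ ψ : S) : vD L θ Δ (L.sub φ ψ) = max (vD L θ Δ φ - vD L θ Δ ψ) 0 := by
  apply le_antisymm
  · apply le_of_eps'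
    intro ε hε
    obtain ⟨m, k, hk, hup, hnear1⟩ := exists_up_near φ (by linarith : (0:ℝ) < ε/2)
    obtain ⟨n, j, hj, hlo, hnear2⟩ := exists_lo_near hcons hmax ψ (by linarith : (0:ℝ) < ε/2)
    have hupN : DLe L Δ φ (L.con θ (m+n) (2^n * k)) :=
      CL.trans hup (CL.con_pow θ m k n).2
    have hloN : DLe L Δ (L.con θ (m+n) (2^m * j)) ψ := by
      have := (CL.con_pow (L := L) (Γ := Δ) θ n j m).1
      rw [Nat.add_comm n m] at this
      exact CL.trans this hlo
    have hmono2 : DLe L Δ (L.sub φ ψ) (L.sub (L.con θ (m+n) (2^n * k)) (L.con θ (m+n) (2^m * j))) :=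
      CL.mono hupN hloN
    rcases le_or_gt (2^n * k) (2^m * j) with hKJ | hKJ
    · -- provable, value 0
      have hprov : CPL.Deduces L Δ (L.sub φ ψ) :=
        CL.mp (CL.nsum_cnt_mono _ hKJ) hmono2
      rw [vD_of_prov hprov]
      positivity
    · have hKle : 2^n * k ≤ 2^(m+n) := by
        have := Nat.mul_le_mul_left (2^n) hk
        have h2 : 2^n * 2^m = 2^(m+n) := by rw [← pow_add]; ring_nf
        omega
      have hcs := CL.csub (L := L) (Γ := Δ) θ (Nat.le_of_lt hKJ) hKle
      have hup3 : DLe L Δ (L.sub φ ψ) (L.con θ (m+n) (2^n * k - 2^m * j)) :=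
        CL.trans hmono2 hcs.1
      have h1 := vD_le_of_up (by omega) hup3
      have hcast : ((2^n * k - 2^m * j : ℕ) : ℝ)/2^(m+n) = (k:ℝ)/2^m - (j:ℝ)/2^n := by
        rw [Nat.cast_sub (Nat.le_of_lt hKJ)]
        rw [sub_div]
        rw [show ((2^n * k : ℕ) : ℝ)/2^(m+n) = (k:ℝ)/2^m from cast_pow_div]
        congr 1
        rw [Nat.add_comm m n]
        exact cast_pow_div
      rw [hcast] at h1
      have : (k:ℝ)/2^m - (j:ℝ)/2^n < vD L θ Δ φ - vD L θ Δ ψ + ε := by linarith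
      have hle : vD L θ Δ φ - vD L θ Δ ψ ≤ max (vD L θ Δ φ - vD L θ Δ ψ) 0 := le_max_left _ _
      linarith
  · apply max_le ?_ (vD_nonneg _)
    apply le_of_eps'
    intro ε hε
    obtain ⟨n, j, hj, hlo, hnear1⟩ := exists_lo_near hcons hmax φ (by linarith : (0:ℝ) < ε/2)
    obtain ⟨m, k, hk, hup, hnear2⟩ := exists_up_near ψ (by linarith : (0:ℝ) < ε/2)
    have hloN : DLe L Δ (L.con θ (n+m) (2^m * j)) φ :=
      CL.trans (CL.con_pow θ n j m).1 hlo
    have hupN : DLe L Δ ψ (L.con θ (n+m) (2^n * k)) := by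
      have := (CL.con_pow (L := L) (Γ := Δ) θ m k n).2
      rw [Nat.add_comm m n] at this
      exact CL.trans hup this
    rcases le_or_gt (2^m * j) (2^n * k) with hJK | hJK
    · -- trivial case : vD φ - vD ψ < ε
      have hcast1 : ((2^m * j : ℕ):ℝ)/2^(n+m) = (j:ℝ)/2^n := cast_pow_div
      have hcast2 : ((2^n * k : ℕ):ℝ)/2^(n+m) = (k:ℝ)/2^m := by
        rw [Nat.add_comm n m]; exact cast_pow_div
      have hrc : ((2^m * j : ℕ):ℝ) ≤ ((2^n * k : ℕ):ℝ) := by exact_mod_cast hJK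
      have h2 : (0:ℝ) < (2:ℝ)^(n+m) := by positivity
      have hr : (j:ℝ)/2^n ≤ (k:ℝ)/2^m := by
        rw [← hcast1, ← hcast2]
        gcongr
      have := vD_nonneg (L := L) (θ := θ) (Δ := Δ) (L.sub φ ψ)
      linarith
    · have hJle : 2^m * j ≤ 2^(n+m) := by
        have := Nat.mul_le_mul_left (2^m) hj
        have h2 : 2^m * 2^n = 2^(n+m) := by rw [← pow_add]; ring_nf
        omega
      have hcs := CL.csub (L := L) (Γ := Δ) θ (Nat.le_of_lt hJK) hJle
      have hlo3 : DLe L Δ (L.con θ (n+m) (2^m * j - 2^n * k)) (L.sub φ ψ) :=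
        CL.trans hcs.2 (CL.mono hloN hupN)
      have h1 := lo_le_vD hcons (by omega) hlo3
      have hcast : ((2^m * j - 2^n * k : ℕ) : ℝ)/2^(n+m) = (j:ℝ)/2^n - (k:ℝ)/2^m := by
        rw [Nat.cast_sub (Nat.le_of_lt hJK), sub_div]
        rw [show ((2^m * j : ℕ) : ℝ)/2^(n+m) = (j:ℝ)/2^n from cast_pow_div]
        congr 1
        rw [Nat.add_comm n m]
        exact cast_pow_div
      rw [hcast] at h1
      linarith

end Truth

/-- A set `Γ` of formulas of an arbitrary continuous propositional logic is consistent
(does not deduce every formula) if and only if it is satisfiable. -/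
theorem consistent_iff_satisfiable [Nonempty S] (L : CPL S) (Γ : Set S) :
    (¬ ∀ φ : S, CPL.Deduces L Γ φ) ↔
      ∃ v : S → ℝ, L.IsTruthAssignment v ∧ ∀ φ ∈ Γ, v φ = 0 := by
  constructor
  · intro h
    set θ := Classical.arbitrary S with hθ
    have hno : ¬ CPL.Deduces L Γ (L.eps θ 0) := fun hded => h fun φ => CL.all_of_o hded φ
    obtain ⟨Δ, hΓΔ, hcons, hmax⟩ := exists_maximal hno
    refine ⟨vD L θ Δ, ⟨fun φ => Set.mem_Icc.mpr ⟨vD_nonneg φ, vD_le_one φ⟩,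
      vD_neg hcons hmax, vD_half hcons hmax, vD_sub hcons hmax⟩, ?_⟩
    intro φ hφ
    exact vD_of_prov (CPL.Deduces.prem (hΓΔ hφ))
  · rintro ⟨v, hv, hΓ⟩ hall
    set θ := Classical.arbitrary S with hθ
    have h0 := sound hv hΓ (hall (L.neg (L.sub θ θ)))
    obtain ⟨hrange, hneg, hhalf, hsub⟩ := hv
    rw [hneg, hsub, sub_self, max_self] at h0
    norm_num at h0

end Stmt7
end
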